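/- arXiv:math/0404381 — 4 statements merged into one kernel-verified Lean document; each statement's English description precedes it below -/
import Mathlib

section
/- Let H be a Hopf algebra, σ a left 2-cocycle on H, and define S₁:H→H by S₁(h)=Σσ⁻¹(S(h₂)⊗h₃)S(h₁), where the product · on A_σ = H (as a coalgebra) is h·k = Σσ(k₁⊗h₁)k₂h₂. Then Σ h₂·S₁(h₁) = ε(h)·1 for every h∈H. -/
open TensorProduct Coalgebra HopfAlgebra

noncomputable section
set_option maxHeartbeats 1000000
set_option synthInstance.maxHeartbeats 1000000

variable (k H : Type) [Field k] [Ring H] [HopfAlgebra k H]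

/-- Convolution product of two linear functionals on a coalgebra. -/
def conv {C : Type} [AddCommGroup C] [Module k C] [Coalgebra k C]
    (f g : C →ₗ[k] k) : C →ₗ[k] k :=
  LinearMap.mul' k k ∘ₗ TensorProduct.map f g ∘ₗ Coalgebra.comul

variable {k H}

/-- `h ⊗ k ⊗ m ↦ ε(h)·σ(k ⊗ m)`. -/
def p23 (σ : H ⊗[k] H →ₗ[k] k) : H ⊗[k] (H ⊗[k] H) →ₗ[k] k :=
  σ ∘ₗ (TensorProduct.lid k (H ⊗[k] H)).toLinearMap ∘ₗ
    TensorProduct.map Coalgebra.counit LinearMap.id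

/-- `h ⊗ k ⊗ m ↦ σ(h ⊗ km)`. -/
def p1_23 (σ : H ⊗[k] H →ₗ[k] k) : H ⊗[k] (H ⊗[k] H) →ₗ[k] k :=
  σ ∘ₗ TensorProduct.map LinearMap.id (LinearMap.mul' k H)

/-- `h ⊗ k ⊗ m ↦ σ(h ⊗ k)·ε(m)`. -/
def p12 (σ : H ⊗[k] H →ₗ[k] k) : H ⊗[k] (H ⊗[k] H) →ₗ[k] k :=
  σ ∘ₗ TensorProduct.map LinearMap.id
    ((TensorProduct.rid k H).toLinearMap ∘ₗ TensorProduct.map LinearMap.id Coalgebra.counit)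

/-- `h ⊗ k ⊗ m ↦ σ(hk ⊗ m)`. -/
def p12_3 (σ : H ⊗[k] H →ₗ[k] k) : H ⊗[k] (H ⊗[k] H) →ₗ[k] k :=
  σ ∘ₗ TensorProduct.map (LinearMap.mul' k H) LinearMap.id ∘ₗ
    (TensorProduct.assoc k H H H).symm.toLinearMap

/-- `h ⊗ k ⊗ m ↦ σ(h ⊗ m)·ε(k)`. -/
def p13 (σ : H ⊗[k] H →ₗ[k] k) : H ⊗[k] (H ⊗[k] H) →ₗ[k] k :=
  σ ∘ₗ TensorProduct.map LinearMap.id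
    ((TensorProduct.lid k H).toLinearMap ∘ₗ TensorProduct.map Coalgebra.counit LinearMap.id)

/-- σ is a (normalized) left 2-cocycle: `σ(h⊗1)=σ(1⊗h)=ε(h)` and the cocycle
condition `Σσ(k₁⊗m₁)σ(h⊗k₂m₂)=Σσ(h₁⊗k₁)σ(h₂k₂⊗m)`, expressed as the
convolution identity `σ₂₃ * σ₁,₂₃ = σ₁₂ * σ₁₂,₃` of functionals on `H ⊗ H ⊗ H`. -/
def IsLeftCocycle (σ : H ⊗[k] H →ₗ[k] k) : Prop :=
  (∀ h : H, σ (h ⊗ₜ 1) = Coalgebra.counit h ∧ σ ((1 : H) ⊗ₜ h) = Coalgebra.counit h) ∧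
  conv k (p23 σ) (p1_23 σ) = conv k (p12 σ) (p12_3 σ)

/-- σ' is a convolution inverse of σ. -/
def IsConvInverse (σ σ' : H ⊗[k] H →ₗ[k] k) : Prop :=
  conv k σ σ' = Coalgebra.counit ∧ conv k σ' σ = Coalgebra.counit

/-- Iterated comultiplication `h ↦ h₁ ⊗ (h₂ ⊗ h₃)`. -/
def Delta3 : H →ₗ[k] H ⊗[k] (H ⊗[k] H) :=
  TensorProduct.map LinearMap.id Coalgebra.comul ∘ₗ Coalgebra.comul

/-- The twisted product of `A_σ`: `h ⊗ k ↦ h·k = Σ σ(k₁⊗h₁) k₂h₂`. -/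
def tmul (σ : H ⊗[k] H →ₗ[k] k) : H ⊗[k] H →ₗ[k] H :=
  (TensorProduct.lid k H).toLinearMap ∘ₗ
    TensorProduct.map (σ ∘ₗ (TensorProduct.comm k H H).toLinearMap)
      (LinearMap.mul' k H ∘ₗ (TensorProduct.comm k H H).toLinearMap) ∘ₗ
    (TensorProduct.tensorTensorTensorComm k H H H H).toLinearMap ∘ₗ
    TensorProduct.map Coalgebra.comul Coalgebra.comul

/-- `S₁(h) = Σ σ⁻¹(S(h₂)⊗h₃)·S(h₁)`. -/
def S1 (σ' : H ⊗[k] H →ₗ[k] k) : H →ₗ[k] H :=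
  (TensorProduct.rid k H).toLinearMap ∘ₗ
    TensorProduct.map (HopfAlgebra.antipode (R := k))
      (σ' ∘ₗ TensorProduct.map (HopfAlgebra.antipode (R := k)) LinearMap.id) ∘ₗ Delta3


section Aux
open LinearMap

noncomputable instance iARing : Ring (H ⊗[k] H) := inferInstance
noncomputable instance iAAlg : Algebra k (H ⊗[k] H) := inferInstance
noncomputable instance iA2Ring : Ring ((H ⊗[k] H) ⊗[k] (H ⊗[k] H)) := inferInstance
noncomputable instance iA2Alg : Algebra k ((H ⊗[k] H) ⊗[k] (H ⊗[k] H)) := inferInstance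
noncomputable instance iBRing : Ring (((H ⊗[k] H) ⊗[k] (H ⊗[k] H)) ⊗[k] (H ⊗[k] H)) := inferInstance
noncomputable instance iBAlg : Algebra k (((H ⊗[k] H) ⊗[k] (H ⊗[k] H)) ⊗[k] (H ⊗[k] H)) := inferInstance

section ConvAlg
variable {C A B : Type} [AddCommGroup C] [Module k C] [Coalgebra k C]
    [Ring A] [Algebra k A] [Ring B] [Algebra k B]

variable (k) in
/-- Convolution product on linear maps from a coalgebra to an algebra. -/
def cva (f g : C →ₗ[k] A) : C →ₗ[k] A :=
  LinearMap.mul' k A ∘ₗ TensorProduct.map f g ∘ₗ Coalgebra.comul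

variable (k A C) in
def cu : C →ₗ[k] A := Algebra.linearMap k A ∘ₗ Coalgebra.counit


lemma map_map_tail {W X₁ X₂ Y₁ Y₂ Z₁ Z₂ : Type} [AddCommGroup W] [Module k W]
    [AddCommGroup X₁] [Module k X₁] [AddCommGroup X₂] [Module k X₂]
    [AddCommGroup Y₁] [Module k Y₁] [AddCommGroup Y₂] [Module k Y₂]
    [AddCommGroup Z₁] [Module k Z₁] [AddCommGroup Z₂] [Module k Z₂]
    (f₂ : Y₁ →ₗ[k] Z₁) (g₂ : Y₂ →ₗ[k] Z₂) (f₁ : X₁ →ₗ[k] Y₁) (g₁ : X₂ →ₗ[k] Y₂)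
    (T : W →ₗ[k] X₁ ⊗[k] X₂) :
    TensorProduct.map f₂ g₂ ∘ₗ (TensorProduct.map f₁ g₁ ∘ₗ T)
      = TensorProduct.map (f₂ ∘ₗ f₁) (g₂ ∘ₗ g₁) ∘ₗ T := by
  rw [← LinearMap.comp_assoc, ← TensorProduct.map_comp]

lemma ctail {X Y Z W : Type} [AddCommGroup X] [Module k X] [AddCommGroup Y] [Module k Y]
    [AddCommGroup Z] [Module k Z] [AddCommGroup W] [Module k W]
    {A : Z →ₗ[k] W} {B : Y →ₗ[k] Z} {D : Y →ₗ[k] W} (h : A ∘ₗ B = D) (T : X →ₗ[k] Y) :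
    A ∘ₗ (B ∘ₗ T) = D ∘ₗ T := by rw [← LinearMap.comp_assoc, h]

lemma cva_assoc (f g h : C →ₗ[k] A) : cva k (cva k f g) h = cva k f (cva k g h) := by
  have hm : LinearMap.mul' k A ∘ₗ TensorProduct.map (LinearMap.mul' k A) LinearMap.id
      = (LinearMap.mul' k A ∘ₗ TensorProduct.map LinearMap.id (LinearMap.mul' k A))
        ∘ₗ (TensorProduct.assoc k A A A).toLinearMap := by
    ext a b c; simp [mul_assoc]
  have hco : (TensorProduct.assoc k C C C).toLinearMap ∘ₗ
      TensorProduct.map Coalgebra.comul LinearMap.id ∘ₗ Coalgebra.comul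
      = TensorProduct.map LinearMap.id Coalgebra.comul ∘ₗ Coalgebra.comul :=
    Coalgebra.coassoc
  have h1 : cva k (cva k f g) h
      = LinearMap.mul' k A ∘ₗ TensorProduct.map (LinearMap.mul' k A) LinearMap.id
        ∘ₗ TensorProduct.map (TensorProduct.map f g) h
        ∘ₗ TensorProduct.map Coalgebra.comul LinearMap.id ∘ₗ Coalgebra.comul := by
    unfold cva
    rw [show TensorProduct.map (LinearMap.mul' k A ∘ₗ TensorProduct.map f g ∘ₗ Coalgebra.comul) h
        = TensorProduct.map (LinearMap.mul' k A) LinearMap.id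
          ∘ₗ TensorProduct.map (TensorProduct.map f g) h
          ∘ₗ TensorProduct.map Coalgebra.comul LinearMap.id by
      rw [← TensorProduct.map_comp, ← TensorProduct.map_comp]; simp]
    simp only [LinearMap.comp_assoc]
  have h2 : cva k f (cva k g h)
      = LinearMap.mul' k A ∘ₗ TensorProduct.map LinearMap.id (LinearMap.mul' k A)
        ∘ₗ TensorProduct.map f (TensorProduct.map g h)
        ∘ₗ TensorProduct.map LinearMap.id Coalgebra.comul ∘ₗ Coalgebra.comul := by
    unfold cva
    rw [show TensorProduct.map f (LinearMap.mul' k A ∘ₗ TensorProduct.map g h ∘ₗ Coalgebra.comul)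
        = TensorProduct.map LinearMap.id (LinearMap.mul' k A)
          ∘ₗ TensorProduct.map f (TensorProduct.map g h)
          ∘ₗ TensorProduct.map LinearMap.id Coalgebra.comul by
      rw [← TensorProduct.map_comp, ← TensorProduct.map_comp]; simp]
    simp only [LinearMap.comp_assoc]
  rw [h1, h2, ← hco]
  simp only [← LinearMap.comp_assoc]
  rw [hm]
  congr 2
  rw [LinearMap.comp_assoc, ← TensorProduct.map_map_comp_assoc_eq, ← LinearMap.comp_assoc]

lemma cva_cu_right (f : C →ₗ[k] A) : cva k f (cu k C A) = f := by
  have h1 : cva k f (cu k C A)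
      = (LinearMap.mul' k A ∘ₗ TensorProduct.map f (Algebra.linearMap k A))
        ∘ₗ (Coalgebra.counit.lTensor C ∘ₗ Coalgebra.comul) := by
    unfold cva cu
    rw [show TensorProduct.map f (Algebra.linearMap k A ∘ₗ Coalgebra.counit)
        = TensorProduct.map f (Algebra.linearMap k A) ∘ₗ
          TensorProduct.map LinearMap.id Coalgebra.counit by
      rw [← TensorProduct.map_comp]; simp]
    simp only [LinearMap.comp_assoc]; rfl
  rw [h1, Coalgebra.lTensor_counit_comp_comul]
  ext x; simp [Algebra.algebraMap_eq_smul_one]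

lemma cva_cu_left (f : C →ₗ[k] A) : cva k (cu k C A) f = f := by
  have h1 : cva k (cu k C A) f
      = (LinearMap.mul' k A ∘ₗ TensorProduct.map (Algebra.linearMap k A) f)
        ∘ₗ (Coalgebra.counit.rTensor C ∘ₗ Coalgebra.comul) := by
    unfold cva cu
    rw [show TensorProduct.map (Algebra.linearMap k A ∘ₗ Coalgebra.counit) f
        = TensorProduct.map (Algebra.linearMap k A) f ∘ₗ
          TensorProduct.map Coalgebra.counit LinearMap.id by
      rw [← TensorProduct.map_comp]; simp]
    simp only [LinearMap.comp_assoc]; rfl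
  rw [h1, Coalgebra.rTensor_counit_comp_comul]
  ext x; simp [Algebra.algebraMap_eq_smul_one]

lemma algHom_comp_cva (φ : A →ₐ[k] B) (f g : C →ₗ[k] A) :
    φ.toLinearMap ∘ₗ cva k f g = cva k (φ.toLinearMap ∘ₗ f) (φ.toLinearMap ∘ₗ g) := by
  have hφ : φ.toLinearMap ∘ₗ LinearMap.mul' k A
      = LinearMap.mul' k B ∘ₗ TensorProduct.map φ.toLinearMap φ.toLinearMap := by
    ext a b; simp
  unfold cva
  simp only [← LinearMap.comp_assoc]
  rw [hφ]
  simp only [LinearMap.comp_assoc]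
  rw [map_map_tail]

lemma algHom_comp_cu (φ : A →ₐ[k] B) :
    φ.toLinearMap ∘ₗ cu k C A = cu k C B := by
  unfold cu
  simp only [← LinearMap.comp_assoc]
  congr 1
  ext; simp

end ConvAlg

section AntipodeComul
variable (k H) in
def pH : H →ₗ[k] H ⊗[k] H :=
  (Algebra.TensorProduct.includeLeft (R := k) (S := k) (A := H) (B := H)).toLinearMap
variable (k H) in
def qH : H →ₗ[k] H ⊗[k] H :=
  (Algebra.TensorProduct.includeRight (R := k) (A := H) (B := H)).toLinearMap

lemma cva_incl {C A₁ A₂ : Type} [AddCommGroup C] [Module k C] [Coalgebra k C]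
    [Ring A₁] [Algebra k A₁] [Ring A₂] [Algebra k A₂]
    (f : C →ₗ[k] A₁) (g : C →ₗ[k] A₂) :
    cva k ((Algebra.TensorProduct.includeLeft (R := k) (S := k) (A := A₁) (B := A₂)).toLinearMap ∘ₗ f)
      ((Algebra.TensorProduct.includeRight (R := k) (A := A₁) (B := A₂)).toLinearMap ∘ₗ g)
    = TensorProduct.map f g ∘ₗ Coalgebra.comul := by
  unfold cva
  rw [← map_map_tail]
  have h1 : LinearMap.mul' k (A₁ ⊗[k] A₂) ∘ₗ
      TensorProduct.map (Algebra.TensorProduct.includeLeft (R := k) (S := k) (A := A₁) (B := A₂)).toLinearMap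
        (Algebra.TensorProduct.includeRight (R := k) (A := A₁) (B := A₂)).toLinearMap
      = LinearMap.id := by
    ext a b
    simp [Algebra.TensorProduct.tmul_mul_tmul]
  rw [ctail h1, LinearMap.id_comp]

lemma comul_eq_cva : (Coalgebra.comul : H →ₗ[k] H ⊗[k] H) = cva k (pH k H) (qH k H) := by
  have := (cva_incl (LinearMap.id (R := k) (M := H)) (LinearMap.id (R := k) (M := H))).symm
  simp only [LinearMap.comp_id, TensorProduct.map_id, LinearMap.id_comp] at this
  exact this

lemma antipode_cva_right : cva k (antipode (R := k) (A := H)) LinearMap.id = cu k H H := by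
  unfold cva cu
  exact mul_antipode_rTensor_comul

lemma antipode_cva_left : cva k LinearMap.id (antipode (R := k) (A := H)) = cu k H H := by
  unfold cva cu
  exact mul_antipode_lTensor_comul

theorem antipode_comul_anti :
    Coalgebra.comul ∘ₗ (antipode (R := k) (A := H))
      = (TensorProduct.comm k H H).toLinearMap ∘ₗ
        (TensorProduct.map (antipode (R := k)) (antipode (R := k)) ∘ₗ Coalgebra.comul) := by
  set S : H →ₗ[k] H := antipode (R := k) with hSdef
  set Δ : H →ₗ[k] H ⊗[k] H := Coalgebra.comul with hΔdef
  have hcc : (TensorProduct.comm k H H).toLinearMap ∘ₗ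
      (TensorProduct.map S S ∘ₗ Δ) = cva k (qH k H ∘ₗ S) (pH k H ∘ₗ S) := by
    unfold cva
    rw [← map_map_tail]
    have h1 : LinearMap.mul' k (H ⊗[k] H) ∘ₗ TensorProduct.map (qH k H) (pH k H)
        = (TensorProduct.comm k H H).toLinearMap := by
      ext a b
      simp [pH, qH, Algebra.TensorProduct.tmul_mul_tmul]
    rw [ctail h1]
  have hΔa : (Bialgebra.comulAlgHom k H).toLinearMap = Δ := rfl
  have hab : cva k (Δ ∘ₗ S) Δ = cu k H (H ⊗[k] H) := by
    have h2 := algHom_comp_cva (Bialgebra.comulAlgHom k H) S LinearMap.id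
    rw [antipode_cva_right, hΔa, LinearMap.comp_id] at h2
    rw [← h2, ← hΔa]
    exact algHom_comp_cu _
  have hq : cva k (qH k H) (qH k H ∘ₗ S) = cu k H (H ⊗[k] H) := by
    have h2 := algHom_comp_cva (Algebra.TensorProduct.includeRight (R := k) (A := H) (B := H))
      LinearMap.id S
    rw [antipode_cva_left, LinearMap.comp_id] at h2
    unfold qH
    rw [← h2]
    exact algHom_comp_cu _
  have hp : cva k (pH k H) (pH k H ∘ₗ S) = cu k H (H ⊗[k] H) := by
    have h2 := algHom_comp_cva (Algebra.TensorProduct.includeLeft (R := k) (S := k) (A := H) (B := H))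
      LinearMap.id S
    rw [antipode_cva_left, LinearMap.comp_id] at h2
    unfold pH
    rw [← h2]
    exact algHom_comp_cu _
  have hbc : cva k Δ (cva k (qH k H ∘ₗ S) (pH k H ∘ₗ S)) = cu k H (H ⊗[k] H) := by
    rw [show Δ = cva k (pH k H) (qH k H) from comul_eq_cva, cva_assoc, ← cva_assoc (qH k H) (qH k H ∘ₗ S) (pH k H ∘ₗ S), hq,
      cva_cu_left, hp]
  rw [hcc]
  calc Δ ∘ₗ S = cva k (Δ ∘ₗ S) (cu k H (H ⊗[k] H)) := (cva_cu_right _).symm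
    _ = cva k (Δ ∘ₗ S) (cva k Δ (cva k (qH k H ∘ₗ S) (pH k H ∘ₗ S))) := by rw [hbc]
    _ = cva k (cva k (Δ ∘ₗ S) Δ) (cva k (qH k H ∘ₗ S) (pH k H ∘ₗ S)) := (cva_assoc _ _ _).symm
    _ = cva k (cu k H (H ⊗[k] H)) (cva k (qH k H ∘ₗ S) (pH k H ∘ₗ S)) := by rw [hab]
    _ = cva k (qH k H ∘ₗ S) (pH k H ∘ₗ S) := cva_cu_left _

end AntipodeComul

section Main
variable (k H)

def pA : (H ⊗[k] H) →ₗ[k] (H ⊗[k] H) ⊗[k] (H ⊗[k] H) :=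
  (Algebra.TensorProduct.includeLeft (R := k) (S := k) (A := H ⊗[k] H) (B := H ⊗[k] H)).toLinearMap
def qA : (H ⊗[k] H) →ₗ[k] (H ⊗[k] H) ⊗[k] (H ⊗[k] H) :=
  (Algebra.TensorProduct.includeRight (R := k) (A := H ⊗[k] H) (B := H ⊗[k] H)).toLinearMap
def PB : ((H ⊗[k] H) ⊗[k] (H ⊗[k] H)) →ₗ[k] ((H ⊗[k] H) ⊗[k] (H ⊗[k] H)) ⊗[k] (H ⊗[k] H) :=
  (Algebra.TensorProduct.includeLeft (R := k) (S := k)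
    (A := (H ⊗[k] H) ⊗[k] (H ⊗[k] H)) (B := H ⊗[k] H)).toLinearMap
def QB : (H ⊗[k] H) →ₗ[k] ((H ⊗[k] H) ⊗[k] (H ⊗[k] H)) ⊗[k] (H ⊗[k] H) :=
  (Algebra.TensorProduct.includeRight (R := k)
    (A := (H ⊗[k] H) ⊗[k] (H ⊗[k] H)) (B := H ⊗[k] H)).toLinearMap

variable {k H}

lemma algHom_comp_eta {A B : Type} [Ring A] [Algebra k A] [Ring B] [Algebra k B]
    (φ : A →ₐ[k] B) : φ.toLinearMap ∘ₗ Algebra.linearMap k A = Algebra.linearMap k B := by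
  ext; simp

-- comul on H ⊗ H, as the instance
lemma comulA_def : (Coalgebra.comul : (H ⊗[k] H) →ₗ[k] (H ⊗[k] H) ⊗[k] (H ⊗[k] H))
    = (TensorProduct.tensorTensorTensorComm k H H H H).toLinearMap ∘ₗ
      TensorProduct.map Coalgebra.comul Coalgebra.comul := rfl

lemma pH_eq : pH k H = TensorProduct.map LinearMap.id (Algebra.linearMap k H) ∘ₗ
    (TensorProduct.rid k H).symm.toLinearMap := by
  ext h; simp [pH, Algebra.TensorProduct.includeLeft_apply]

lemma qH_eq : qH k H = TensorProduct.map (Algebra.linearMap k H) LinearMap.id ∘ₗ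
    (TensorProduct.lid k H).symm.toLinearMap := by
  ext h; simp [qH, Algebra.TensorProduct.includeRight_apply]

-- comul ∘ includeLeft = (pH ⊗ pH) ∘ comul
lemma comulA_pH : (Coalgebra.comul : (H ⊗[k] H) →ₗ[k] _) ∘ₗ pH k H
    = TensorProduct.map (pH k H) (pH k H) ∘ₗ Coalgebra.comul := by
  rw [comulA_def, pH_eq, LinearMap.comp_assoc]
  rw [map_map_tail]
  have h1 : (Coalgebra.comul : H →ₗ[k] _) ∘ₗ Algebra.linearMap k H
      = Algebra.linearMap k (H ⊗[k] H) := algHom_comp_eta (Bialgebra.comulAlgHom k H)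
  rw [h1]
  simp only [LinearMap.comp_id]
  have h2 : TensorProduct.map (Coalgebra.comul (R := k) (A := H)) (Algebra.linearMap k (H ⊗[k] H))
      = TensorProduct.map LinearMap.id (Algebra.linearMap k (H ⊗[k] H)) ∘ₗ
        TensorProduct.map Coalgebra.comul LinearMap.id := by
    rw [← TensorProduct.map_comp]; simp
  rw [h2, LinearMap.comp_assoc]
  have h3 : TensorProduct.map (Coalgebra.comul (R := k) (A := H)) (LinearMap.id (M := k)) ∘ₗ
      (TensorProduct.rid k H).symm.toLinearMap
      = (TensorProduct.rid k (H ⊗[k] H)).symm.toLinearMap ∘ₗ Coalgebra.comul := by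
    ext h; simp
  rw [h3, ← LinearMap.comp_assoc, ← LinearMap.comp_assoc]
  congr 1
  ext a b
  simp [pH, Algebra.TensorProduct.includeLeft_apply, Algebra.TensorProduct.one_def]

lemma comulA_qH : (Coalgebra.comul : (H ⊗[k] H) →ₗ[k] _) ∘ₗ qH k H
    = TensorProduct.map (qH k H) (qH k H) ∘ₗ Coalgebra.comul := by
  rw [comulA_def, qH_eq, LinearMap.comp_assoc]
  rw [map_map_tail]
  have h1 : (Coalgebra.comul : H →ₗ[k] _) ∘ₗ Algebra.linearMap k H
      = Algebra.linearMap k (H ⊗[k] H) := algHom_comp_eta (Bialgebra.comulAlgHom k H)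
  rw [h1]
  simp only [LinearMap.comp_id]
  have h2 : TensorProduct.map (Algebra.linearMap k (H ⊗[k] H)) (Coalgebra.comul (R := k) (A := H))
      = TensorProduct.map (Algebra.linearMap k (H ⊗[k] H)) LinearMap.id ∘ₗ
        TensorProduct.map LinearMap.id Coalgebra.comul := by
    rw [← TensorProduct.map_comp]; simp
  rw [h2, LinearMap.comp_assoc]
  have h3 : TensorProduct.map (LinearMap.id (M := k)) (Coalgebra.comul (R := k) (A := H)) ∘ₗ
      (TensorProduct.lid k H).symm.toLinearMap
      = (TensorProduct.lid k (H ⊗[k] H)).symm.toLinearMap ∘ₗ Coalgebra.comul := by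
    ext h; simp
  rw [h3, ← LinearMap.comp_assoc, ← LinearMap.comp_assoc]
  congr 1
  ext a b
  simp [qH, Algebra.TensorProduct.includeRight_apply, Algebra.TensorProduct.one_def]

end Main

section Main2
variable {σ σ' : H ⊗[k] H →ₗ[k] k}

lemma comm_comp_pA : (TensorProduct.comm k (H ⊗[k] H) (H ⊗[k] H)).toLinearMap ∘ₗ pA k H
    = qA k H := by
  ext a b; simp [pA, qA, Algebra.TensorProduct.one_def]

lemma comm_comp_qA : (TensorProduct.comm k (H ⊗[k] H) (H ⊗[k] H)).toLinearMap ∘ₗ qA k H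
    = pA k H := by
  ext a b; simp [pA, qA, Algebra.TensorProduct.one_def]

lemma commA_push (f g : H →ₗ[k] (H ⊗[k] H) ⊗[k] (H ⊗[k] H)) :
    (TensorProduct.comm k (H ⊗[k] H) (H ⊗[k] H)).toLinearMap ∘ₗ cva k f g
      = cva k ((TensorProduct.comm k (H ⊗[k] H) (H ⊗[k] H)).toLinearMap ∘ₗ f)
          ((TensorProduct.comm k (H ⊗[k] H) (H ⊗[k] H)).toLinearMap ∘ₗ g) := by
  have h := algHom_comp_cva
    ((Algebra.TensorProduct.comm k (H ⊗[k] H) (H ⊗[k] H)).toAlgHom) f g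
  have hc : ((Algebra.TensorProduct.comm k (H ⊗[k] H) (H ⊗[k] H)).toAlgHom).toLinearMap
      = (TensorProduct.comm k (H ⊗[k] H) (H ⊗[k] H)).toLinearMap := by
    ext a b; simp
  rwa [hc] at h

lemma comulA_pH_S : (Coalgebra.comul : (H ⊗[k] H) →ₗ[k] _) ∘ₗ (pH k H ∘ₗ antipode (R := k))
    = cva k (qA k H ∘ₗ (pH k H ∘ₗ antipode (R := k)))
        (pA k H ∘ₗ (pH k H ∘ₗ antipode (R := k))) := by
  rw [← LinearMap.comp_assoc, comulA_pH, LinearMap.comp_assoc, antipode_comul_anti]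
  rw [show TensorProduct.map (pH k H) (pH k H) ∘ₗ
        ((TensorProduct.comm k H H).toLinearMap ∘ₗ
          (TensorProduct.map (antipode (R := k)) (antipode (R := k)) ∘ₗ Coalgebra.comul))
      = (TensorProduct.comm k (H ⊗[k] H) (H ⊗[k] H)).toLinearMap ∘ₗ
          (TensorProduct.map (pH k H) (pH k H) ∘ₗ
            (TensorProduct.map (antipode (R := k)) (antipode (R := k)) ∘ₗ Coalgebra.comul)) from by
    rw [ctail (TensorProduct.map_comp_comm_eq (pH k H) (pH k H)), LinearMap.comp_assoc]]
  rw [map_map_tail]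
  rw [show TensorProduct.map (pH k H ∘ₗ antipode (R := k)) (pH k H ∘ₗ antipode (R := k))
        ∘ₗ Coalgebra.comul
      = cva k (pA k H ∘ₗ (pH k H ∘ₗ antipode (R := k)))
          (qA k H ∘ₗ (pH k H ∘ₗ antipode (R := k))) from by
    rw [pA, qA, ← LinearMap.comp_assoc, ← LinearMap.comp_assoc]
    exact (cva_incl _ _).symm]
  rw [commA_push]
  rw [ctail comm_comp_pA (pH k H ∘ₗ antipode (R := k))]
  rw [ctail comm_comp_qA (pH k H ∘ₗ antipode (R := k))]

lemma comulA_qH_cva : (Coalgebra.comul : (H ⊗[k] H) →ₗ[k] _) ∘ₗ qH k H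
    = cva k (pA k H ∘ₗ qH k H) (qA k H ∘ₗ qH k H) := by
  rw [comulA_qH]
  rw [show TensorProduct.map (qH k H) (qH k H) ∘ₗ Coalgebra.comul
      = cva k (pA k H ∘ₗ qH k H) (qA k H ∘ₗ qH k H) from by
    rw [pA, qA]
    exact (cva_incl _ _).symm]

end Main2

section Main3
variable (σ σ' : H ⊗[k] H →ₗ[k] k)

/-- `t(h) = σ'(S(h₁) ⊗ h₂)`. -/
def tw : H →ₗ[k] k :=
  σ' ∘ₗ (TensorProduct.map (antipode (R := k)) LinearMap.id ∘ₗ Coalgebra.comul)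

lemma mul_eta_right : LinearMap.mul' k H ∘ₗ TensorProduct.map LinearMap.id (Algebra.linearMap k H)
    = (TensorProduct.rid k H).toLinearMap := by
  ext a
  simp [Algebra.smul_def]

lemma S1_eq : S1 σ' = cva k (antipode (R := k)) (Algebra.linearMap k H ∘ₗ tw σ') := by
  unfold cva S1 Delta3 tw
  rw [show TensorProduct.map (antipode (R := k))
        (Algebra.linearMap k H ∘ₗ (σ' ∘ₗ (TensorProduct.map (antipode (R := k)) LinearMap.id ∘ₗ Coalgebra.comul)))
      = TensorProduct.map LinearMap.id (Algebra.linearMap k H) ∘ₗ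
          (TensorProduct.map (antipode (R := k)) (σ' ∘ₗ TensorProduct.map (antipode (R := k)) LinearMap.id) ∘ₗ
            TensorProduct.map LinearMap.id Coalgebra.comul) from by
    rw [map_map_tail, ← TensorProduct.map_comp]
    simp only [LinearMap.comp_id, LinearMap.id_comp, LinearMap.comp_assoc]]
  simp only [LinearMap.comp_assoc]
  rw [ctail mul_eta_right (TensorProduct.map (antipode (R := k))
    (σ' ∘ₗ TensorProduct.map (antipode (R := k)) LinearMap.id) ∘ₗ
      (TensorProduct.map LinearMap.id Coalgebra.comul ∘ₗ Coalgebra.comul))]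

lemma w_cva : TensorProduct.map (antipode (R := k)) LinearMap.id ∘ₗ (Coalgebra.comul : H →ₗ[k] _)
    = cva k (pH k H ∘ₗ antipode (R := k)) (qH k H) := by
  have h := cva_incl (C := H) (antipode (R := k)) (LinearMap.id (M := H))
  rw [LinearMap.comp_id] at h
  rw [← h, pH, qH]

lemma v_cva : TensorProduct.map (S1 σ') LinearMap.id ∘ₗ (Coalgebra.comul : H →ₗ[k] _)
    = cva k (pH k H ∘ₗ S1 σ') (qH k H) := by
  have h := cva_incl (C := H) (S1 σ') (LinearMap.id (M := H))
  rw [LinearMap.comp_id] at h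
  rw [← h, pH, qH]

lemma pH_S1 : pH k H ∘ₗ S1 σ'
    = cva k (pH k H ∘ₗ antipode (R := k))
        (Algebra.linearMap k (H ⊗[k] H) ∘ₗ tw σ') := by
  rw [S1_eq]
  have h := algHom_comp_cva
    (Algebra.TensorProduct.includeLeft (R := k) (S := k) (A := H) (B := H))
    (antipode (R := k)) (Algebra.linearMap k H ∘ₗ tw σ')
  rw [show (Algebra.TensorProduct.includeLeft (R := k) (S := k) (A := H) (B := H)).toLinearMap
      = pH k H from rfl] at h
  have hη := algHom_comp_eta (Algebra.TensorProduct.includeLeft (R := k) (S := k) (A := H) (B := H))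
  rw [show (Algebra.TensorProduct.includeLeft (R := k) (S := k) (A := H) (B := H)).toLinearMap
      = pH k H from rfl] at hη
  rw [h, ← LinearMap.comp_assoc (tw σ'), hη]

/-- `Δ₂ ∘ (pH ∘ S1)` as a convolution word. -/
lemma comul_pH_S1 : (Coalgebra.comul : (H ⊗[k] H) →ₗ[k] _) ∘ₗ (pH k H ∘ₗ S1 σ')
    = cva k (cva k (qA k H ∘ₗ (pH k H ∘ₗ antipode (R := k)))
          (pA k H ∘ₗ (pH k H ∘ₗ antipode (R := k))))
        (Algebra.linearMap k ((H ⊗[k] H) ⊗[k] (H ⊗[k] H)) ∘ₗ tw σ') := by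
  rw [pH_S1]
  have h := algHom_comp_cva (Bialgebra.comulAlgHom k (H ⊗[k] H))
    (pH k H ∘ₗ antipode (R := k)) (Algebra.linearMap k (H ⊗[k] H) ∘ₗ tw σ')
  rw [show (Bialgebra.comulAlgHom k (H ⊗[k] H)).toLinearMap
      = (Coalgebra.comul : (H ⊗[k] H) →ₗ[k] _) from rfl] at h
  have hη := algHom_comp_eta (Bialgebra.comulAlgHom k (H ⊗[k] H))
  rw [show (Bialgebra.comulAlgHom k (H ⊗[k] H)).toLinearMap
      = (Coalgebra.comul : (H ⊗[k] H) →ₗ[k] _) from rfl] at hη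
  rw [h, comulA_pH_S, ← LinearMap.comp_assoc (tw σ'), hη]

/-- `Δ₂ ∘ w` as a convolution word. -/
lemma comul_w : (Coalgebra.comul : (H ⊗[k] H) →ₗ[k] _) ∘ₗ
      (TensorProduct.map (antipode (R := k)) LinearMap.id ∘ₗ (Coalgebra.comul : H →ₗ[k] _))
    = cva k (cva k (qA k H ∘ₗ (pH k H ∘ₗ antipode (R := k)))
          (pA k H ∘ₗ (pH k H ∘ₗ antipode (R := k))))
        (cva k (pA k H ∘ₗ qH k H) (qA k H ∘ₗ qH k H)) := by
  rw [w_cva]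
  have h := algHom_comp_cva (Bialgebra.comulAlgHom k (H ⊗[k] H))
    (pH k H ∘ₗ antipode (R := k)) (qH k H)
  rw [show (Bialgebra.comulAlgHom k (H ⊗[k] H)).toLinearMap
      = (Coalgebra.comul : (H ⊗[k] H) →ₗ[k] _) from rfl] at h
  rw [h, comulA_pH_S, comulA_qH_cva]

/-- `Δ₂ ∘ v` as a convolution word. -/
lemma comul_v : (Coalgebra.comul : (H ⊗[k] H) →ₗ[k] _) ∘ₗ
      (TensorProduct.map (S1 σ') LinearMap.id ∘ₗ (Coalgebra.comul : H →ₗ[k] _))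
    = cva k (cva k (cva k (qA k H ∘ₗ (pH k H ∘ₗ antipode (R := k)))
          (pA k H ∘ₗ (pH k H ∘ₗ antipode (R := k))))
        (Algebra.linearMap k ((H ⊗[k] H) ⊗[k] (H ⊗[k] H)) ∘ₗ tw σ'))
        (cva k (pA k H ∘ₗ qH k H) (qA k H ∘ₗ qH k H)) := by
  rw [v_cva]
  have h := algHom_comp_cva (Bialgebra.comulAlgHom k (H ⊗[k] H))
    (pH k H ∘ₗ S1 σ') (qH k H)
  rw [show (Bialgebra.comulAlgHom k (H ⊗[k] H)).toLinearMap
      = (Coalgebra.comul : (H ⊗[k] H) →ₗ[k] _) from rfl] at h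
  rw [h, comul_pH_S1, comulA_qH_cva]

end Main3

section Main4
variable (σ σ' : H ⊗[k] H →ₗ[k] k)

/-- The collapse map `Γ : ((H⊗H)⊗(H⊗H))⊗(H⊗H) → (H⊗H)⊗(H⊗H)`, `z ⊗ x ↦ σ'(x) • z`. -/
def Gm : (((H ⊗[k] H) ⊗[k] (H ⊗[k] H)) ⊗[k] (H ⊗[k] H)) →ₗ[k] ((H ⊗[k] H) ⊗[k] (H ⊗[k] H)) :=
  (TensorProduct.rid k ((H ⊗[k] H) ⊗[k] (H ⊗[k] H))).toLinearMap ∘ₗ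
    TensorProduct.map LinearMap.id σ'

lemma Gm_mul_left : Gm σ' ∘ₗ (LinearMap.mul' k (((H ⊗[k] H) ⊗[k] (H ⊗[k] H)) ⊗[k] (H ⊗[k] H)) ∘ₗ
      TensorProduct.map (PB k H) LinearMap.id)
    = LinearMap.mul' k ((H ⊗[k] H) ⊗[k] (H ⊗[k] H)) ∘ₗ TensorProduct.map LinearMap.id (Gm σ') := by
  apply TensorProduct.ext'
  intro u z
  have key : ∀ z, Gm σ' (PB k H u * z) = u * Gm σ' z := by
    intro z
    induction z using TensorProduct.induction_on with
    | zero => simp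
    | tmul v x => simp [Gm, PB, Algebra.TensorProduct.tmul_mul_tmul, mul_smul_comm]
    | add z₁ z₂ h₁ h₂ => rw [mul_add, map_add, h₁, h₂, map_add, mul_add]
  simp [key]

lemma Gm_mul_right : Gm σ' ∘ₗ (LinearMap.mul' k (((H ⊗[k] H) ⊗[k] (H ⊗[k] H)) ⊗[k] (H ⊗[k] H)) ∘ₗ
      TensorProduct.map LinearMap.id (PB k H))
    = LinearMap.mul' k ((H ⊗[k] H) ⊗[k] (H ⊗[k] H)) ∘ₗ TensorProduct.map (Gm σ') LinearMap.id := by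
  apply TensorProduct.ext'
  intro z u
  have key : ∀ z, Gm σ' (z * PB k H u) = Gm σ' z * u := by
    intro z
    induction z using TensorProduct.induction_on with
    | zero => simp
    | tmul v x => simp [Gm, PB, Algebra.TensorProduct.tmul_mul_tmul, smul_mul_assoc]
    | add z₁ z₂ h₁ h₂ => rw [add_mul, map_add, h₁, h₂, map_add, add_mul]
  simp [key]

lemma Gm_QB : Gm σ' ∘ₗ QB k H
    = Algebra.linearMap k ((H ⊗[k] H) ⊗[k] (H ⊗[k] H)) ∘ₗ σ' := by
  apply TensorProduct.ext'
  intro a b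
  simp [Gm, QB, Algebra.algebraMap_eq_smul_one]

lemma Ga (f' : H →ₗ[k] (H ⊗[k] H) ⊗[k] (H ⊗[k] H))
    (G : H →ₗ[k] ((H ⊗[k] H) ⊗[k] (H ⊗[k] H)) ⊗[k] (H ⊗[k] H)) :
    Gm σ' ∘ₗ cva k (PB k H ∘ₗ f') G = cva k f' (Gm σ' ∘ₗ G) := by
  unfold cva
  rw [show TensorProduct.map (PB k H ∘ₗ f') G
      = TensorProduct.map (PB k H) LinearMap.id ∘ₗ TensorProduct.map f' G from by
    rw [← TensorProduct.map_comp]; simp]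
  simp only [LinearMap.comp_assoc]
  rw [show Gm σ' ∘ₗ (LinearMap.mul' k (((H ⊗[k] H) ⊗[k] (H ⊗[k] H)) ⊗[k] (H ⊗[k] H)) ∘ₗ
      (TensorProduct.map (PB k H) LinearMap.id ∘ₗ (TensorProduct.map f' G ∘ₗ Coalgebra.comul)))
      = (Gm σ' ∘ₗ (LinearMap.mul' k _ ∘ₗ TensorProduct.map (PB k H) LinearMap.id)) ∘ₗ
        (TensorProduct.map f' G ∘ₗ Coalgebra.comul) from by
    simp only [LinearMap.comp_assoc]]
  rw [Gm_mul_left]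
  simp only [LinearMap.comp_assoc]
  rw [show TensorProduct.map LinearMap.id (Gm σ') ∘ₗ (TensorProduct.map f' G ∘ₗ Coalgebra.comul)
      = TensorProduct.map f' (Gm σ' ∘ₗ G) ∘ₗ Coalgebra.comul from by
    rw [map_map_tail]; simp]

lemma Gb (g' : H →ₗ[k] (H ⊗[k] H) ⊗[k] (H ⊗[k] H))
    (G : H →ₗ[k] ((H ⊗[k] H) ⊗[k] (H ⊗[k] H)) ⊗[k] (H ⊗[k] H)) :
    Gm σ' ∘ₗ cva k G (PB k H ∘ₗ g') = cva k (Gm σ' ∘ₗ G) g' := by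
  unfold cva
  rw [show TensorProduct.map G (PB k H ∘ₗ g')
      = TensorProduct.map LinearMap.id (PB k H) ∘ₗ TensorProduct.map G g' from by
    rw [← TensorProduct.map_comp]; simp]
  simp only [LinearMap.comp_assoc]
  rw [show Gm σ' ∘ₗ (LinearMap.mul' k (((H ⊗[k] H) ⊗[k] (H ⊗[k] H)) ⊗[k] (H ⊗[k] H)) ∘ₗ
      (TensorProduct.map LinearMap.id (PB k H) ∘ₗ (TensorProduct.map G g' ∘ₗ Coalgebra.comul)))
      = (Gm σ' ∘ₗ (LinearMap.mul' k _ ∘ₗ TensorProduct.map LinearMap.id (PB k H))) ∘ₗ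
        (TensorProduct.map G g' ∘ₗ Coalgebra.comul) from by
    simp only [LinearMap.comp_assoc]]
  rw [Gm_mul_right]
  simp only [LinearMap.comp_assoc]
  rw [show TensorProduct.map (Gm σ') LinearMap.id ∘ₗ (TensorProduct.map G g' ∘ₗ Coalgebra.comul)
      = TensorProduct.map (Gm σ' ∘ₗ G) g' ∘ₗ Coalgebra.comul from by
    rw [map_map_tail]; simp]

end Main4

section Main5
variable (σ σ' : H ⊗[k] H →ₗ[k] k)

/-- `Ψ = Δ₂ ⊗ id : A₂ → B`, as a linear map. -/
def Psi : ((H ⊗[k] H) ⊗[k] (H ⊗[k] H)) →ₗ[k] (((H ⊗[k] H) ⊗[k] (H ⊗[k] H)) ⊗[k] (H ⊗[k] H)) :=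
  TensorProduct.map Coalgebra.comul LinearMap.id

lemma Psi_algHom : (Algebra.TensorProduct.map (Bialgebra.comulAlgHom k (H ⊗[k] H))
      (AlgHom.id k (H ⊗[k] H))).toLinearMap = Psi (k := k) (H := H) := by
  apply TensorProduct.ext'
  intro u x
  simp [Psi]

lemma Psi_push (f g : H →ₗ[k] (H ⊗[k] H) ⊗[k] (H ⊗[k] H)) :
    Psi ∘ₗ cva k f g = cva k (Psi (k := k) (H := H) ∘ₗ f) (Psi ∘ₗ g) := by
  have h := algHom_comp_cva (Algebra.TensorProduct.map (Bialgebra.comulAlgHom k (H ⊗[k] H))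
      (AlgHom.id k (H ⊗[k] H))) f g
  rwa [Psi_algHom] at h

lemma Psi_pA : Psi (k := k) (H := H) ∘ₗ pA k H = PB k H ∘ₗ Coalgebra.comul := by
  apply TensorProduct.ext'
  intro a b
  simp [Psi, pA, PB]

lemma Psi_qA : Psi (k := k) (H := H) ∘ₗ qA k H = QB k H := by
  apply TensorProduct.ext'
  intro a b
  simp [Psi, qA, QB, Algebra.TensorProduct.one_def]

end Main5

section Main6
variable (σ σ' : H ⊗[k] H →ₗ[k] k)

/-- The rotation `(u ⊗ v) ⊗ w ↦ (w ⊗ u) ⊗ v` of `B = (A ⊗ A) ⊗ A`, as an algebra equiv. -/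
def PiA : (((H ⊗[k] H) ⊗[k] (H ⊗[k] H)) ⊗[k] (H ⊗[k] H)) ≃ₐ[k]
    (((H ⊗[k] H) ⊗[k] (H ⊗[k] H)) ⊗[k] (H ⊗[k] H)) :=
  (Algebra.TensorProduct.comm k ((H ⊗[k] H) ⊗[k] (H ⊗[k] H)) (H ⊗[k] H)).trans
    (Algebra.TensorProduct.assoc k k k (H ⊗[k] H) (H ⊗[k] H) (H ⊗[k] H)).symm

def PiL : (((H ⊗[k] H) ⊗[k] (H ⊗[k] H)) ⊗[k] (H ⊗[k] H)) →ₗ[k]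
    (((H ⊗[k] H) ⊗[k] (H ⊗[k] H)) ⊗[k] (H ⊗[k] H)) :=
  (PiA (k := k) (H := H)).toLinearMap

lemma PiA_tmul (u v w : H ⊗[k] H) : PiA (k := k) (H := H) ((u ⊗ₜ v) ⊗ₜ w) = (w ⊗ₜ u) ⊗ₜ v := by
  simp [PiA, Algebra.TensorProduct.comm_tmul, Algebra.TensorProduct.assoc_symm_tmul]

lemma Pi_push (f g : H →ₗ[k] ((H ⊗[k] H) ⊗[k] (H ⊗[k] H)) ⊗[k] (H ⊗[k] H)) :
    PiL ∘ₗ cva k f g = cva k (PiL (k := k) (H := H) ∘ₗ f) (PiL ∘ₗ g) :=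
  algHom_comp_cva (PiA (k := k) (H := H)).toAlgHom f g

lemma SL1 : PiL (k := k) (H := H) ∘ₗ (PB k H ∘ₗ (qA k H ∘ₗ (pH k H ∘ₗ antipode (R := k))))
    = QB k H ∘ₗ (pH k H ∘ₗ antipode (R := k)) := by
  apply LinearMap.ext; intro h
  simp [PiL, PB, QB, pA, qA, pH, qH, Algebra.TensorProduct.one_def, PiA_tmul]

lemma SL2 : PiL (k := k) (H := H) ∘ₗ (PB k H ∘ₗ (pA k H ∘ₗ (pH k H ∘ₗ antipode (R := k))))
    = PB k H ∘ₗ (qA k H ∘ₗ (pH k H ∘ₗ antipode (R := k))) := by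
  apply LinearMap.ext; intro h
  simp [PiL, PB, QB, pA, qA, pH, qH, Algebra.TensorProduct.one_def, PiA_tmul]

lemma SL3 : PiL (k := k) (H := H) ∘ₗ (QB k H ∘ₗ (pH k H ∘ₗ antipode (R := k)))
    = PB k H ∘ₗ (pA k H ∘ₗ (pH k H ∘ₗ antipode (R := k))) := by
  apply LinearMap.ext; intro h
  simp [PiL, PB, QB, pA, qA, pH, qH, Algebra.TensorProduct.one_def, PiA_tmul]

lemma SL4 : PiL (k := k) (H := H) ∘ₗ (QB k H ∘ₗ qH k H)
    = PB k H ∘ₗ (pA k H ∘ₗ qH k H) := by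
  apply LinearMap.ext; intro h
  simp [PiL, PB, QB, pA, qA, pH, qH, Algebra.TensorProduct.one_def, PiA_tmul]

lemma SL5 : PiL (k := k) (H := H) ∘ₗ (PB k H ∘ₗ (pA k H ∘ₗ qH k H))
    = PB k H ∘ₗ (qA k H ∘ₗ qH k H) := by
  apply LinearMap.ext; intro h
  simp [PiL, PB, QB, pA, qA, pH, qH, Algebra.TensorProduct.one_def, PiA_tmul]

lemma SL6 : PiL (k := k) (H := H) ∘ₗ (PB k H ∘ₗ (qA k H ∘ₗ qH k H))
    = QB k H ∘ₗ qH k H := by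
  apply LinearMap.ext; intro h
  simp [PiL, PB, QB, pA, qA, pH, qH, Algebra.TensorProduct.one_def, PiA_tmul]

end Main6

section Main7
variable (σ σ' : H ⊗[k] H →ₗ[k] k)

lemma PB_push (f g : H →ₗ[k] (H ⊗[k] H) ⊗[k] (H ⊗[k] H)) :
    PB k H ∘ₗ cva k f g = cva k (PB k H ∘ₗ f) (PB k H ∘ₗ g) :=
  algHom_comp_cva (Algebra.TensorProduct.includeLeft (R := k) (S := k)
    (A := (H ⊗[k] H) ⊗[k] (H ⊗[k] H)) (B := H ⊗[k] H)) f g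

lemma QB_push (f g : H →ₗ[k] H ⊗[k] H) :
    QB k H ∘ₗ cva k f g = cva k (QB k H ∘ₗ f) (QB k H ∘ₗ g) :=
  algHom_comp_cva (Algebra.TensorProduct.includeRight (R := k)
    (A := (H ⊗[k] H) ⊗[k] (H ⊗[k] H)) (B := H ⊗[k] H)) f g

lemma regroup {A' : Type} [Ring A'] [Algebra k A'] (a b c d e f : H →ₗ[k] A') :
    cva k (cva k a b) (cva k (cva k c d) (cva k e f))
      = cva k (cva k a (cva k b c)) (cva k (cva k d e) f) := by
  conv_lhs => rw [cva_assoc, cva_assoc]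
  conv_rhs => rw [cva_assoc, cva_assoc, cva_assoc]

lemma GammaWB :
    Gm σ' ∘ₗ cva k
        (cva k (PB k H ∘ₗ (qA k H ∘ₗ (pH k H ∘ₗ antipode (R := k))))
               (PB k H ∘ₗ (pA k H ∘ₗ (pH k H ∘ₗ antipode (R := k)))))
        (cva k (cva k (QB k H ∘ₗ (pH k H ∘ₗ antipode (R := k))) (QB k H ∘ₗ qH k H))
               (cva k (PB k H ∘ₗ (pA k H ∘ₗ qH k H)) (PB k H ∘ₗ (qA k H ∘ₗ qH k H))))
    = cva k (cva k (qA k H ∘ₗ (pH k H ∘ₗ antipode (R := k)))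
               (pA k H ∘ₗ (pH k H ∘ₗ antipode (R := k))))
        (cva k (Algebra.linearMap k ((H ⊗[k] H) ⊗[k] (H ⊗[k] H)) ∘ₗ tw σ')
               (cva k (pA k H ∘ₗ qH k H) (qA k H ∘ₗ qH k H))) := by
  rw [← PB_push, ← QB_push, ← PB_push, Ga, Gb]
  rw [show Gm σ' ∘ₗ (QB k H ∘ₗ cva k (pH k H ∘ₗ antipode (R := k)) (qH k H))
      = Algebra.linearMap k ((H ⊗[k] H) ⊗[k] (H ⊗[k] H)) ∘ₗ tw σ' from by
    rw [← LinearMap.comp_assoc, Gm_QB, LinearMap.comp_assoc, ← w_cva]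
    rfl]

lemma PsiR :
    Psi ∘ₗ cva k
        (cva k (qA k H ∘ₗ (pH k H ∘ₗ antipode (R := k)))
               (pA k H ∘ₗ (pH k H ∘ₗ antipode (R := k))))
        (cva k (pA k H ∘ₗ qH k H) (qA k H ∘ₗ qH k H))
    = cva k (cva k (QB k H ∘ₗ (pH k H ∘ₗ antipode (R := k)))
               (cva k (PB k H ∘ₗ (qA k H ∘ₗ (pH k H ∘ₗ antipode (R := k))))
                      (PB k H ∘ₗ (pA k H ∘ₗ (pH k H ∘ₗ antipode (R := k))))))
        (cva k (cva k (PB k H ∘ₗ (pA k H ∘ₗ qH k H)) (PB k H ∘ₗ (qA k H ∘ₗ qH k H)))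
               (QB k H ∘ₗ qH k H)) := by
  rw [Psi_push, Psi_push, Psi_push]
  rw [ctail Psi_qA (pH k H ∘ₗ antipode (R := k))]
  rw [show Psi (k := k) (H := H) ∘ₗ (pA k H ∘ₗ (pH k H ∘ₗ antipode (R := k)))
      = cva k (PB k H ∘ₗ (qA k H ∘ₗ (pH k H ∘ₗ antipode (R := k))))
          (PB k H ∘ₗ (pA k H ∘ₗ (pH k H ∘ₗ antipode (R := k)))) from by
    rw [ctail Psi_pA (pH k H ∘ₗ antipode (R := k)), LinearMap.comp_assoc, comulA_pH_S, PB_push]]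
  rw [show Psi (k := k) (H := H) ∘ₗ (pA k H ∘ₗ qH k H)
      = cva k (PB k H ∘ₗ (pA k H ∘ₗ qH k H)) (PB k H ∘ₗ (qA k H ∘ₗ qH k H)) from by
    rw [ctail Psi_pA (qH k H), LinearMap.comp_assoc, comulA_qH_cva, PB_push]]
  rw [ctail Psi_qA (qH k H)]

lemma PiWB :
    PiL ∘ₗ cva k
        (cva k (PB k H ∘ₗ (qA k H ∘ₗ (pH k H ∘ₗ antipode (R := k))))
               (PB k H ∘ₗ (pA k H ∘ₗ (pH k H ∘ₗ antipode (R := k)))))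
        (cva k (cva k (QB k H ∘ₗ (pH k H ∘ₗ antipode (R := k))) (QB k H ∘ₗ qH k H))
               (cva k (PB k H ∘ₗ (pA k H ∘ₗ qH k H)) (PB k H ∘ₗ (qA k H ∘ₗ qH k H))))
    = cva k (cva k (QB k H ∘ₗ (pH k H ∘ₗ antipode (R := k)))
               (cva k (PB k H ∘ₗ (qA k H ∘ₗ (pH k H ∘ₗ antipode (R := k))))
                      (PB k H ∘ₗ (pA k H ∘ₗ (pH k H ∘ₗ antipode (R := k))))))
        (cva k (cva k (PB k H ∘ₗ (pA k H ∘ₗ qH k H)) (PB k H ∘ₗ (qA k H ∘ₗ qH k H)))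
               (QB k H ∘ₗ qH k H)) := by
  rw [Pi_push, Pi_push, Pi_push, Pi_push, Pi_push]
  rw [SL1, SL2, SL3, SL4, SL5, SL6]
  exact regroup _ _ _ _ _ _

lemma collapse :
    (TensorProduct.lid k H).toLinearMap ∘ₗ (TensorProduct.map σ (LinearMap.mul' k H) ∘ₗ Gm σ')
      = (TensorProduct.lid k H).toLinearMap ∘ₗ
          (TensorProduct.map (LinearMap.mul' k k ∘ₗ TensorProduct.map σ' σ) (LinearMap.mul' k H) ∘ₗ
            PiL) := by
  ext a b c d e f
  simp [Gm, PiL, PiA_tmul, TensorProduct.smul_tmul', smul_smul, mul_comm]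
  rw [← TensorProduct.smul_tmul', map_smul, smul_eq_mul, mul_comm]

lemma hMcs : TensorProduct.map (conv k σ' σ) (LinearMap.mul' k H)
    = TensorProduct.map (LinearMap.mul' k k ∘ₗ TensorProduct.map σ' σ) (LinearMap.mul' k H) ∘ₗ
      Psi := by
  unfold Psi
  rw [← TensorProduct.map_comp]
  rfl

lemma Pmap_eq (hσ'2 : conv k σ' σ = Coalgebra.counit) :
    (TensorProduct.lid k H).toLinearMap ∘ₗ
      (TensorProduct.map (conv k σ' σ) (LinearMap.mul' k H) ∘ₗ
        (Coalgebra.comul : (H ⊗[k] H) →ₗ[k] _))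
    = LinearMap.mul' k H := by
  rw [hσ'2]
  rw [show TensorProduct.map (Coalgebra.counit (R := k) (A := H ⊗[k] H)) (LinearMap.mul' k H)
      = TensorProduct.map LinearMap.id (LinearMap.mul' k H) ∘ₗ
        TensorProduct.map Coalgebra.counit LinearMap.id from by
    rw [← TensorProduct.map_comp]; simp]
  simp only [LinearMap.comp_assoc]
  rw [show TensorProduct.map (Coalgebra.counit (R := k) (A := H ⊗[k] H)) LinearMap.id ∘ₗ
      (Coalgebra.comul : (H ⊗[k] H) →ₗ[k] _)
      = TensorProduct.mk k k ((H ⊗[k] H)) 1 from Coalgebra.rTensor_counit_comp_comul]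
  apply LinearMap.ext; intro x
  simp

lemma tmul_eq : tmul σ = (TensorProduct.lid k H).toLinearMap ∘ₗ
    (TensorProduct.map σ (LinearMap.mul' k H) ∘ₗ
      ((Coalgebra.comul : (H ⊗[k] H) →ₗ[k] _) ∘ₗ (TensorProduct.comm k H H).toLinearMap)) := by
  unfold _root_.tmul
  rw [comulA_def]
  have h1 := TensorProduct.map_comp_comm_eq (Coalgebra.comul (R := k) (A := H))
    (Coalgebra.comul (R := k) (A := H))
  have h2 : TensorProduct.map σ (LinearMap.mul' k H) ∘ₗ
      ((TensorProduct.tensorTensorTensorComm k H H H H).toLinearMap ∘ₗ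
        (TensorProduct.comm k (H ⊗[k] H) (H ⊗[k] H)).toLinearMap)
      = TensorProduct.map (σ ∘ₗ (TensorProduct.comm k H H).toLinearMap)
          (LinearMap.mul' k H ∘ₗ (TensorProduct.comm k H H).toLinearMap) ∘ₗ
        (TensorProduct.tensorTensorTensorComm k H H H H).toLinearMap := by
    ext a b c d
    simp
  rw [show ((TensorProduct.tensorTensorTensorComm k H H H H).toLinearMap ∘ₗ
        TensorProduct.map Coalgebra.comul Coalgebra.comul) ∘ₗ (TensorProduct.comm k H H).toLinearMap
      = (TensorProduct.tensorTensorTensorComm k H H H H).toLinearMap ∘ₗ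
        ((TensorProduct.comm k (H ⊗[k] H) (H ⊗[k] H)).toLinearMap ∘ₗ
          TensorProduct.map Coalgebra.comul Coalgebra.comul) from by
    rw [LinearMap.comp_assoc, h1]]
  rw [show TensorProduct.map σ (LinearMap.mul' k H) ∘ₗ
      ((TensorProduct.tensorTensorTensorComm k H H H H).toLinearMap ∘ₗ
        ((TensorProduct.comm k (H ⊗[k] H) (H ⊗[k] H)).toLinearMap ∘ₗ
          TensorProduct.map Coalgebra.comul Coalgebra.comul))
      = (TensorProduct.map σ (LinearMap.mul' k H) ∘ₗ
          ((TensorProduct.tensorTensorTensorComm k H H H H).toLinearMap ∘ₗ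
            (TensorProduct.comm k (H ⊗[k] H) (H ⊗[k] H)).toLinearMap)) ∘ₗ
        TensorProduct.map Coalgebra.comul Coalgebra.comul from by
    simp only [LinearMap.comp_assoc]]
  rw [h2]
  simp only [LinearMap.comp_assoc]

end Main7

section Main8
variable (σ σ' : H ⊗[k] H →ₗ[k] k)

lemma comm_comm : (TensorProduct.comm k H H).toLinearMap ∘ₗ (TensorProduct.comm k H H).toLinearMap
    = LinearMap.id := by
  apply TensorProduct.ext'
  intro a b
  simp

lemma collapse_tail (X : H →ₗ[k] ((H ⊗[k] H) ⊗[k] (H ⊗[k] H)) ⊗[k] (H ⊗[k] H)) :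
    (TensorProduct.lid k H).toLinearMap ∘ₗ
        (TensorProduct.map σ (LinearMap.mul' k H) ∘ₗ (Gm σ' ∘ₗ X))
      = (TensorProduct.lid k H).toLinearMap ∘ₗ
        (TensorProduct.map (LinearMap.mul' k k ∘ₗ TensorProduct.map σ' σ) (LinearMap.mul' k H) ∘ₗ
          (PiL ∘ₗ X)) := by
  simp only [← LinearMap.comp_assoc]
  congr 1
  simp only [LinearMap.comp_assoc]
  exact collapse σ σ'

lemma hMcs_tail (X : H →ₗ[k] (H ⊗[k] H) ⊗[k] (H ⊗[k] H)) :
    TensorProduct.map (LinearMap.mul' k k ∘ₗ TensorProduct.map σ' σ) (LinearMap.mul' k H) ∘ₗ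
        (Psi ∘ₗ X)
      = TensorProduct.map (conv k σ' σ) (LinearMap.mul' k H) ∘ₗ X := by
  rw [← LinearMap.comp_assoc, ← hMcs]

lemma Pmap_tail (hσ'2 : conv k σ' σ = Coalgebra.counit) (X : H →ₗ[k] H ⊗[k] H) :
    (TensorProduct.lid k H).toLinearMap ∘ₗ
        (TensorProduct.map (conv k σ' σ) (LinearMap.mul' k H) ∘ₗ
          ((Coalgebra.comul : (H ⊗[k] H) →ₗ[k] _) ∘ₗ X))
      = LinearMap.mul' k H ∘ₗ X := by
  simp only [← LinearMap.comp_assoc]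
  congr 1
  simp only [LinearMap.comp_assoc]
  exact Pmap_eq σ σ' hσ'2

end Main8

end Aux

/-- `Σ h₂ · S₁(h₁) = ε(h)·1` in `A_σ` (twisted product
`h·k = Σσ(k₁⊗h₁)k₂h₂`). -/
theorem stmt4 (σ σ' : H ⊗[k] H →ₗ[k] k)
    (hσ : IsLeftCocycle σ) (hσ' : IsConvInverse σ σ') :
    tmul σ ∘ₗ TensorProduct.map LinearMap.id (S1 σ') ∘ₗ
        (TensorProduct.comm k H H).toLinearMap ∘ₗ Coalgebra.comul
      = Algebra.linearMap k H ∘ₗ Coalgebra.counit := by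
  obtain ⟨-, hσ'2⟩ := hσ'
  rw [tmul_eq σ]
  simp only [LinearMap.comp_assoc]
  rw [ctail (TensorProduct.map_comp_comm_eq (LinearMap.id (R := k) (M := H)) (S1 σ')) Coalgebra.comul]
  simp only [LinearMap.comp_assoc]
  rw [ctail comm_comm (TensorProduct.map (S1 σ') LinearMap.id ∘ₗ Coalgebra.comul),
    LinearMap.id_comp]
  rw [comul_v σ']
  rw [cva_assoc (cva k (qA k H ∘ₗ (pH k H ∘ₗ antipode (R := k)))
    (pA k H ∘ₗ (pH k H ∘ₗ antipode (R := k))))]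
  rw [← GammaWB σ']
  rw [collapse_tail σ σ']
  rw [PiWB]
  rw [← PsiR]
  rw [← comul_w]
  rw [hMcs_tail σ σ']
  rw [Pmap_tail σ σ' hσ'2]
  exact mul_antipode_rTensor_comul
end
end

section
/- Let H be a finite-dimensional Hopf algebra, ζ∈H* a nonzero left integral for H*, and v:H→H* defined by v(h)(k)=ζ(kS(h)). Then for all h,k∈H: Σ⟨v(h), k₂⟩ k₁ = Σ⟨v(h₁), k⟩ h₂. -/
open TensorProduct Coalgebra HopfAlgebra

noncomputable section

variable (k H : Type) [Field k] [Ring H] [HopfAlgebra k H]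

variable {k H}

set_option maxHeartbeats 1000000
set_option synthInstance.maxHeartbeats 400000

lemma dual_sep {y z : H} (hyz : ∀ φ : H →ₗ[k] k, φ y = φ z) : y = z := by
  rw [← sub_eq_zero, ← Module.forall_dual_apply_eq_zero_iff k (y - z)]
  intro φ
  simp [hyz φ]

lemma csum_left {x : H} (r : Coalgebra.Repr k x (H × H)) :
    ∑ i ∈ r.index, Coalgebra.counit (R := k) (r.left i) • r.right i = x := by
  have h := Coalgebra.sum_counit_tmul_eq (R := k) r
  have h2 := congrArg (TensorProduct.lid k H) h
  simp only [map_sum, TensorProduct.lid_tmul, one_smul] at h2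
  exact h2

lemma csum_right {x : H} (r : Coalgebra.Repr k x (H × H)) :
    ∑ i ∈ r.index, Coalgebra.counit (R := k) (r.right i) • r.left i = x := by
  have h := Coalgebra.sum_tmul_counit_eq (R := k) r
  have h2 := congrArg (TensorProduct.rid k H) h
  simp only [map_sum, TensorProduct.rid_tmul, one_smul] at h2
  exact h2

lemma KK (ζ : H →ₗ[k] k) (hint : ∀ ξ : H →ₗ[k] k, conv k ξ ζ = ξ 1 • ζ) (y : H) :
    (TensorProduct.rid k H) ((LinearMap.lTensor H ζ) (Coalgebra.comul (R := k) y)) =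
      ζ y • (1 : H) := by
  apply dual_sep (k := k)
  intro φ
  have h1 := congrFun (congrArg DFunLike.coe (hint φ)) y
  rw [conv] at h1
  set r := Coalgebra.Repr.arbitrary k y with hr
  simp only [LinearMap.coe_comp, Function.comp_apply, LinearMap.smul_apply, smul_eq_mul] at h1
  rw [← r.eq] at h1
  rw [← r.eq]
  simp only [map_sum, TensorProduct.map_tmul, LinearMap.mul'_apply, LinearMap.lTensor_tmul,
    TensorProduct.rid_tmul, map_smul, smul_eq_mul, map_one] at h1 ⊢
  rw [mul_comm (ζ y) (φ 1), ← h1]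
  exact Finset.sum_congr rfl fun i _ => mul_comm _ _

lemma natAssoc :
    (TensorProduct.assoc k H H (H ⊗[k] H)).toLinearMap ∘ₗ
      LinearMap.lTensor (H ⊗[k] H) (Coalgebra.comul (R := k) (A := H)) =
    LinearMap.lTensor H (LinearMap.lTensor H (Coalgebra.comul (R := k) (A := H))) ∘ₗ
      (TensorProduct.assoc k H H H).toLinearMap := by
  apply TensorProduct.ext_threefold
  intro a b c
  simp

lemma MeqN :
    (TensorProduct.assoc k H H (H ⊗[k] H)).toLinearMap ∘ₗ
      TensorProduct.map (Coalgebra.comul (R := k) (A := H)) (Coalgebra.comul (R := k) (A := H))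
        ∘ₗ Coalgebra.comul =
    LinearMap.lTensor H
        (LinearMap.lTensor H (Coalgebra.comul (R := k) (A := H)) ∘ₗ Coalgebra.comul) ∘ₗ
      (Coalgebra.comul (R := k) (A := H)) := by
  rw [← LinearMap.lTensor_comp_rTensor]
  calc (TensorProduct.assoc k H H (H ⊗[k] H)).toLinearMap ∘ₗ
      ((Coalgebra.comul (R := k) (A := H)).lTensor (H ⊗[k] H) ∘ₗ
        (Coalgebra.comul (R := k) (A := H)).rTensor H) ∘ₗ Coalgebra.comul
      = (LinearMap.lTensor H (LinearMap.lTensor H (Coalgebra.comul (R := k) (A := H))) ∘ₗ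
          (TensorProduct.assoc k H H H).toLinearMap) ∘ₗ
          ((Coalgebra.comul (R := k) (A := H)).rTensor H ∘ₗ Coalgebra.comul) := by
        rw [← natAssoc]
        ext x
        simp only [LinearMap.coe_comp, Function.comp_apply, LinearEquiv.coe_coe]
    _ = LinearMap.lTensor H (LinearMap.lTensor H (Coalgebra.comul (R := k) (A := H))) ∘ₗ
          ((TensorProduct.assoc k H H H).toLinearMap ∘ₗ
            (Coalgebra.comul (R := k) (A := H)).rTensor H ∘ₗ Coalgebra.comul) := by
        rfl
    _ = LinearMap.lTensor H (LinearMap.lTensor H (Coalgebra.comul (R := k) (A := H))) ∘ₗ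
          ((Coalgebra.comul (R := k) (A := H)).lTensor H ∘ₗ Coalgebra.comul) := by
        rw [Coalgebra.coassoc]
    _ = LinearMap.lTensor H
          (LinearMap.lTensor H (Coalgebra.comul (R := k) (A := H)) ∘ₗ Coalgebra.comul) ∘ₗ
          (Coalgebra.comul (R := k) (A := H)) := by
        rw [LinearMap.lTensor_comp, LinearMap.comp_assoc]

/-- `a ⊗ (b ⊗ (c ⊗ d)) ↦ (a * S d) ⊗ (b * S c)` -/
def phiB : H ⊗[k] (H ⊗[k] (H ⊗[k] H)) →ₗ[k] H ⊗[k] H :=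
  LinearMap.mul' k (H ⊗[k] H) ∘ₗ
    LinearMap.lTensor (H ⊗[k] H)
      ((TensorProduct.comm k H H).toLinearMap ∘ₗ
        TensorProduct.map (HopfAlgebra.antipode (R := k)) (HopfAlgebra.antipode (R := k))) ∘ₗ
    (TensorProduct.assoc k H H (H ⊗[k] H)).symm.toLinearMap

@[simp] lemma phiB_tmul (a b c d : H) :
    phiB (a ⊗ₜ[k] (b ⊗ₜ[k] (c ⊗ₜ[k] d))) =
      (a * HopfAlgebra.antipode (R := k) d) ⊗ₜ[k] (b * HopfAlgebra.antipode (R := k) c) := by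
  simp [phiB, Algebra.TensorProduct.tmul_mul_tmul]

/-- `a ⊗ (b ⊗ (c ⊗ d)) ↦ Δ(S a) * (Δ b * (S d ⊗ S c))` -/
def phiA : H ⊗[k] (H ⊗[k] (H ⊗[k] H)) →ₗ[k] H ⊗[k] H :=
  LinearMap.mul' k (H ⊗[k] H) ∘ₗ
    LinearMap.lTensor (H ⊗[k] H) (LinearMap.mul' k (H ⊗[k] H)) ∘ₗ
    TensorProduct.map (Coalgebra.comul ∘ₗ HopfAlgebra.antipode (R := k))
      (TensorProduct.map Coalgebra.comul
        ((TensorProduct.comm k H H).toLinearMap ∘ₗ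
          TensorProduct.map (HopfAlgebra.antipode (R := k)) (HopfAlgebra.antipode (R := k))))

@[simp] lemma phiA_tmul (a b c d : H) :
    phiA (a ⊗ₜ[k] (b ⊗ₜ[k] (c ⊗ₜ[k] d))) =
      Coalgebra.comul (R := k) (HopfAlgebra.antipode (R := k) a) *
        (Coalgebra.comul (R := k) b *
          (HopfAlgebra.antipode (R := k) d ⊗ₜ[k] HopfAlgebra.antipode (R := k) c)) := by
  simp [phiA]

lemma stepB (b : H) (ρ : Coalgebra.Repr k b (H × H)) (τ : (i : ρ.ι) → Coalgebra.Repr k (ρ.right i) (H × H)) :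
    ∑ i ∈ ρ.index, ∑ j ∈ (τ i).index,
      (Coalgebra.comul (R := k) (ρ.left i)) *
        (HopfAlgebra.antipode (R := k) ((τ i).right j) ⊗ₜ[k]
          HopfAlgebra.antipode (R := k) ((τ i).left j)) =
      Coalgebra.counit (R := k) b • ((1 : H) ⊗ₜ[k] (1 : H)) := by
  classical
  set σ : (i : ρ.ι) → Coalgebra.Repr k (ρ.left i) (H × H) := fun i => ℛ k (ρ.left i) with hσ
  set w : (i : ρ.ι) → (j : (τ i).ι) → Coalgebra.Repr k ((τ i).left j) (H × H) :=
    fun i j => ℛ k ((τ i).left j) with hw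
  have hMN := congrFun (congrArg DFunLike.coe (MeqN (k := k) (H := H))) b
  simp only [LinearMap.coe_comp, Function.comp_apply, LinearEquiv.coe_coe] at hMN
  -- compute the "M" side
  have hML : (TensorProduct.assoc k H H (H ⊗[k] H))
      ((TensorProduct.map Coalgebra.comul Coalgebra.comul) (Coalgebra.comul (R := k) b)) =
      ∑ i ∈ ρ.index, ∑ p ∈ (σ i).index, ∑ j ∈ (τ i).index,
        (σ i).left p ⊗ₜ[k] ((σ i).right p ⊗ₜ[k] ((τ i).left j ⊗ₜ[k] (τ i).right j)) := by
    rw [← ρ.eq]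
    simp only [map_sum, TensorProduct.map_tmul]
    refine Finset.sum_congr rfl fun i _ => ?_
    rw [← (σ i).eq, ← (τ i).eq]
    simp only [TensorProduct.sum_tmul, TensorProduct.tmul_sum, map_sum,
      TensorProduct.assoc_tmul]
    rw [Finset.sum_comm]
  -- compute the "N" side
  have hNL : (LinearMap.lTensor H
        (LinearMap.lTensor H (Coalgebra.comul (R := k) (A := H)) ∘ₗ Coalgebra.comul))
      (Coalgebra.comul (R := k) b) =
      ∑ i ∈ ρ.index, ∑ j ∈ (τ i).index, ∑ n ∈ (w i j).index,
        ρ.left i ⊗ₜ[k]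
          ((w i j).left n ⊗ₜ[k] ((w i j).right n ⊗ₜ[k] (τ i).right j)) := by
    rw [← ρ.eq]
    simp only [map_sum, LinearMap.lTensor_tmul, LinearMap.coe_comp, Function.comp_apply]
    refine Finset.sum_congr rfl fun i _ => ?_
    rw [← Coalgebra.coassoc_apply (ρ.right i), ← (τ i).eq]
    simp only [map_sum, LinearMap.rTensor_tmul, TensorProduct.tmul_sum]
    refine Finset.sum_congr rfl fun j _ => ?_
    rw [← (w i j).eq]
    simp only [TensorProduct.sum_tmul, map_sum, TensorProduct.assoc_tmul,
      TensorProduct.tmul_sum]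
  -- now apply phiB to both sides
  have hkey := congrArg (phiB (k := k) (H := H)) (hML.symm.trans (hMN.trans hNL))
  simp only [map_sum, phiB_tmul] at hkey
  -- identify LHS of goal with LHS of hkey
  have hL : ∑ i ∈ ρ.index, ∑ j ∈ (τ i).index,
      (Coalgebra.comul (R := k) (ρ.left i)) *
        (HopfAlgebra.antipode (R := k) ((τ i).right j) ⊗ₜ[k]
          HopfAlgebra.antipode (R := k) ((τ i).left j)) =
      ∑ i ∈ ρ.index, ∑ p ∈ (σ i).index, ∑ j ∈ (τ i).index,
        ((σ i).left p * HopfAlgebra.antipode (R := k) ((τ i).right j)) ⊗ₜ[k]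
          ((σ i).right p * HopfAlgebra.antipode (R := k) ((τ i).left j)) := by
    refine Finset.sum_congr rfl fun i _ => ?_
    rw [Finset.sum_comm]
    refine Finset.sum_congr rfl fun j _ => ?_
    rw [← (σ i).eq, Finset.sum_mul]
    exact Finset.sum_congr rfl fun p _ => Algebra.TensorProduct.tmul_mul_tmul _ _ _ _
  rw [hL, hkey]
  -- collapse the RHS
  have hstep : ∀ i ∈ ρ.index,
      (∑ j ∈ (τ i).index, ∑ n ∈ (w i j).index,
        (ρ.left i * HopfAlgebra.antipode (R := k) ((τ i).right j)) ⊗ₜ[k]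
          ((w i j).left n * HopfAlgebra.antipode (R := k) ((w i j).right n))) =
      (ρ.left i * HopfAlgebra.antipode (R := k) (ρ.right i)) ⊗ₜ[k] (1 : H) := by
    intro i _
    have h1 : ∀ j ∈ (τ i).index,
        (∑ n ∈ (w i j).index,
          (ρ.left i * HopfAlgebra.antipode (R := k) ((τ i).right j)) ⊗ₜ[k]
            ((w i j).left n * HopfAlgebra.antipode (R := k) ((w i j).right n))) =
        (ρ.left i * HopfAlgebra.antipode (R := k)
            (Coalgebra.counit (R := k) ((τ i).left j) • (τ i).right j)) ⊗ₜ[k] (1 : H) := by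
      intro j _
      rw [← TensorProduct.tmul_sum, HopfAlgebra.sum_mul_antipode_eq_smul (w i j)]
      rw [TensorProduct.tmul_smul, map_smul, mul_smul_comm, ← TensorProduct.smul_tmul']
    rw [Finset.sum_congr rfl h1, ← TensorProduct.sum_tmul, ← Finset.mul_sum, ← map_sum,
      csum_left (τ i)]
  rw [Finset.sum_congr rfl hstep, ← TensorProduct.sum_tmul,
    HopfAlgebra.sum_mul_antipode_eq_smul ρ, TensorProduct.smul_tmul']

lemma comul_antipode (h : H) :
    Coalgebra.comul (R := k) (HopfAlgebra.antipode (R := k) h) =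
      (TensorProduct.comm k H H)
        (TensorProduct.map (HopfAlgebra.antipode (R := k)) (HopfAlgebra.antipode (R := k))
          (Coalgebra.comul (R := k) h)) := by
  classical
  set r : Coalgebra.Repr k h (H × H) := ℛ k h with hr
  set s : (i : r.ι) → Coalgebra.Repr k (r.right i) (H × H) := fun i => ℛ k (r.right i) with hs
  set t : (i : r.ι) → (j : (s i).ι) → Coalgebra.Repr k ((s i).right j) (H × H) :=
    fun i j => ℛ k ((s i).right j) with ht
  set σ : (i : r.ι) → Coalgebra.Repr k (r.left i) (H × H) := fun i => ℛ k (r.left i) with hσ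
  have hMN := congrFun (congrArg DFunLike.coe (MeqN (k := k) (H := H))) h
  simp only [LinearMap.coe_comp, Function.comp_apply, LinearEquiv.coe_coe] at hMN
  have hML : (TensorProduct.assoc k H H (H ⊗[k] H))
      ((TensorProduct.map Coalgebra.comul Coalgebra.comul) (Coalgebra.comul (R := k) h)) =
      ∑ i ∈ r.index, ∑ p ∈ (σ i).index, ∑ j ∈ (s i).index,
        (σ i).left p ⊗ₜ[k] ((σ i).right p ⊗ₜ[k] ((s i).left j ⊗ₜ[k] (s i).right j)) := by
    rw [← r.eq]
    simp only [map_sum, TensorProduct.map_tmul]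
    refine Finset.sum_congr rfl fun i _ => ?_
    rw [← (σ i).eq, ← (s i).eq]
    simp only [TensorProduct.sum_tmul, TensorProduct.tmul_sum, map_sum,
      TensorProduct.assoc_tmul]
    rw [Finset.sum_comm]
  have hNL : (LinearMap.lTensor H
        (LinearMap.lTensor H (Coalgebra.comul (R := k) (A := H)) ∘ₗ Coalgebra.comul))
      (Coalgebra.comul (R := k) h) =
      ∑ i ∈ r.index, ∑ j ∈ (s i).index, ∑ m ∈ (t i j).index,
        r.left i ⊗ₜ[k]
          ((s i).left j ⊗ₜ[k] ((t i j).left m ⊗ₜ[k] (t i j).right m)) := by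
    rw [← r.eq]
    simp only [map_sum, LinearMap.lTensor_tmul, LinearMap.coe_comp, Function.comp_apply]
    refine Finset.sum_congr rfl fun i _ => ?_
    rw [← (s i).eq]
    simp only [map_sum, LinearMap.lTensor_tmul, TensorProduct.tmul_sum]
    refine Finset.sum_congr rfl fun j _ => ?_
    rw [← (t i j).eq]
    simp only [TensorProduct.tmul_sum, map_sum]
  have hkey := congrArg (phiA (k := k) (H := H)) (hML.symm.trans (hMN.trans hNL))
  simp only [map_sum, phiA_tmul] at hkey
  -- the N-side collapses to `comul (antipode h)`
  have hXN : (∑ i ∈ r.index, ∑ j ∈ (s i).index, ∑ m ∈ (t i j).index,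
      Coalgebra.comul (R := k) (HopfAlgebra.antipode (R := k) (r.left i)) *
        (Coalgebra.comul (R := k) ((s i).left j) *
          (HopfAlgebra.antipode (R := k) ((t i j).right m) ⊗ₜ[k]
            HopfAlgebra.antipode (R := k) ((t i j).left m)))) =
      Coalgebra.comul (R := k) (HopfAlgebra.antipode (R := k) h) := by
    have h1 : ∀ i ∈ r.index,
        (∑ j ∈ (s i).index, ∑ m ∈ (t i j).index,
          Coalgebra.comul (R := k) (HopfAlgebra.antipode (R := k) (r.left i)) *
            (Coalgebra.comul (R := k) ((s i).left j) *
              (HopfAlgebra.antipode (R := k) ((t i j).right m) ⊗ₜ[k]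
                HopfAlgebra.antipode (R := k) ((t i j).left m)))) =
        Coalgebra.comul (R := k) (HopfAlgebra.antipode (R := k)
          (Coalgebra.counit (R := k) (r.right i) • r.left i)) := by
      intro i _
      have hfac : ∀ j ∈ (s i).index,
          (∑ m ∈ (t i j).index,
            Coalgebra.comul (R := k) (HopfAlgebra.antipode (R := k) (r.left i)) *
              (Coalgebra.comul (R := k) ((s i).left j) *
                (HopfAlgebra.antipode (R := k) ((t i j).right m) ⊗ₜ[k]
                  HopfAlgebra.antipode (R := k) ((t i j).left m)))) =
          Coalgebra.comul (R := k) (HopfAlgebra.antipode (R := k) (r.left i)) *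
            (∑ m ∈ (t i j).index,
              Coalgebra.comul (R := k) ((s i).left j) *
                (HopfAlgebra.antipode (R := k) ((t i j).right m) ⊗ₜ[k]
                  HopfAlgebra.antipode (R := k) ((t i j).left m))) :=
        fun j _ => (Finset.mul_sum _ _ _).symm
      rw [Finset.sum_congr rfl hfac, ← Finset.mul_sum,
        stepB (r.right i) (s i) (t i), ← Algebra.TensorProduct.one_def,
        mul_smul_comm, mul_one, ← map_smul, ← map_smul]
    rw [Finset.sum_congr rfl h1, ← map_sum, ← map_sum, csum_right r]
  -- the M-side collapses to `comm (map S S (comul h))`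
  have hXM : (∑ i ∈ r.index, ∑ p ∈ (σ i).index, ∑ j ∈ (s i).index,
      Coalgebra.comul (R := k) (HopfAlgebra.antipode (R := k) ((σ i).left p)) *
        (Coalgebra.comul (R := k) ((σ i).right p) *
          (HopfAlgebra.antipode (R := k) ((s i).right j) ⊗ₜ[k]
            HopfAlgebra.antipode (R := k) ((s i).left j)))) =
      (TensorProduct.comm k H H)
        (TensorProduct.map (HopfAlgebra.antipode (R := k)) (HopfAlgebra.antipode (R := k))
          (Coalgebra.comul (R := k) h)) := by
    have h1 : ∀ i ∈ r.index,
        (∑ p ∈ (σ i).index, ∑ j ∈ (s i).index,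
          Coalgebra.comul (R := k) (HopfAlgebra.antipode (R := k) ((σ i).left p)) *
            (Coalgebra.comul (R := k) ((σ i).right p) *
              (HopfAlgebra.antipode (R := k) ((s i).right j) ⊗ₜ[k]
                HopfAlgebra.antipode (R := k) ((s i).left j)))) =
        Coalgebra.counit (R := k) (r.left i) •
          (TensorProduct.comm k H H)
            (TensorProduct.map (HopfAlgebra.antipode (R := k)) (HopfAlgebra.antipode (R := k))
              (Coalgebra.comul (R := k) (r.right i))) := by
      intro i _
      rw [Finset.sum_comm]
      have h2 : ∀ j ∈ (s i).index,
          (∑ p ∈ (σ i).index,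
            Coalgebra.comul (R := k) (HopfAlgebra.antipode (R := k) ((σ i).left p)) *
              (Coalgebra.comul (R := k) ((σ i).right p) *
                (HopfAlgebra.antipode (R := k) ((s i).right j) ⊗ₜ[k]
                  HopfAlgebra.antipode (R := k) ((s i).left j)))) =
          Coalgebra.counit (R := k) (r.left i) •
            (HopfAlgebra.antipode (R := k) ((s i).right j) ⊗ₜ[k]
              HopfAlgebra.antipode (R := k) ((s i).left j)) := by
        intro j _
        simp only [← mul_assoc]
        rw [← Finset.sum_mul]
        have h3 : (∑ p ∈ (σ i).index,
            Coalgebra.comul (R := k) (HopfAlgebra.antipode (R := k) ((σ i).left p)) *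
              Coalgebra.comul (R := k) ((σ i).right p)) =
            Coalgebra.counit (R := k) (r.left i) • (1 : H ⊗[k] H) := by
          simp only [← Bialgebra.comul_mul]
          rw [← map_sum, HopfAlgebra.sum_antipode_mul_eq_smul (σ i), map_smul,
            Bialgebra.comul_one]
        rw [h3, smul_mul_assoc, one_mul]
      rw [Finset.sum_congr rfl h2, ← Finset.smul_sum]
      congr 1
      rw [← (s i).eq]
      simp only [map_sum, TensorProduct.map_tmul, TensorProduct.comm_tmul]
    rw [Finset.sum_congr rfl h1]
    simp only [← map_smul]
    rw [← map_sum, ← map_sum, ← map_sum, csum_left r]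
  rw [← hXN, ← hkey, hXM]

lemma CL (ζ : H →ₗ[k] k) (α β h : H) (r : Coalgebra.Repr k h (H × H))
    (s : (i : r.ι) → Coalgebra.Repr k (r.left i) (H × H)) :
    ∑ i ∈ r.index, ∑ j ∈ (s i).index,
      ζ (β * HopfAlgebra.antipode (R := k) ((s i).left j)) •
        (α * (HopfAlgebra.antipode (R := k) ((s i).right j) * r.right i)) =
    ζ (β * HopfAlgebra.antipode (R := k) h) • α := by
  classical
  set τ : (i : r.ι) → Coalgebra.Repr k (r.right i) (H × H) := fun i => ℛ k (r.right i) with hτ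
  have E3 := Coalgebra.sum_tmul_tmul_eq (R := k) r s τ
  set Θ : H ⊗[k] (H ⊗[k] H) →ₗ[k] H :=
    (TensorProduct.lid k H).toLinearMap ∘ₗ
      TensorProduct.map (ζ ∘ₗ LinearMap.mulLeft k β ∘ₗ HopfAlgebra.antipode (R := k))
        (LinearMap.mulLeft k α ∘ₗ LinearMap.mul' k H ∘ₗ
          LinearMap.rTensor H (HopfAlgebra.antipode (R := k))) with hΘ
  have hθ := congrArg Θ E3
  simp only [hΘ, map_sum, LinearMap.coe_comp, Function.comp_apply, LinearEquiv.coe_coe,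
    TensorProduct.map_tmul, TensorProduct.lid_tmul, LinearMap.mulLeft_apply,
    LinearMap.mul'_apply, LinearMap.rTensor_tmul] at hθ
  rw [hθ]
  have h1 : ∀ i ∈ r.index,
      (∑ j ∈ (τ i).index,
        ζ (β * HopfAlgebra.antipode (R := k) (r.left i)) •
          (α * (HopfAlgebra.antipode (R := k) ((τ i).left j) * (τ i).right j))) =
      ζ (β * HopfAlgebra.antipode (R := k)
          (Coalgebra.counit (R := k) (r.right i) • r.left i)) • α := by
    intro i _
    rw [← Finset.smul_sum, ← Finset.mul_sum,
      HopfAlgebra.sum_antipode_mul_eq_smul (τ i), mul_smul_comm, mul_one,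
      map_smul, mul_smul_comm, map_smul, smul_smul, smul_eq_mul, mul_comm]
  rw [Finset.sum_congr rfl h1, ← Finset.sum_smul, ← map_sum, ← Finset.mul_sum, ← map_sum,
    csum_right r]

/-- if ζ is a nonzero left integral for `H*` and `v(h) = ζ(–·S(h))`, then
`Σ ⟨v(h),k₂⟩ k₁ = Σ ⟨v(h₁),k⟩ h₂`, expressed as an equality of linear maps `H ⊗ H → H`
(first slot `h`, second slot `k`). -/
theorem stmt6 [FiniteDimensional k H] (ζ : H →ₗ[k] k) (hζ : ζ ≠ 0)
    (hint : ∀ ξ : H →ₗ[k] k, conv k ξ ζ = ξ 1 • ζ) :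
    (TensorProduct.rid k H).toLinearMap ∘ₗ
        TensorProduct.map LinearMap.id
          (ζ ∘ₗ LinearMap.mul' k H ∘ₗ
            TensorProduct.map LinearMap.id (HopfAlgebra.antipode (R := k)) ∘ₗ
            (TensorProduct.comm k H H).toLinearMap) ∘ₗ
        (TensorProduct.leftComm k H H H).toLinearMap ∘ₗ
        TensorProduct.map LinearMap.id Coalgebra.comul
      =
    (TensorProduct.rid k H).toLinearMap ∘ₗ
        TensorProduct.map LinearMap.id
          (ζ ∘ₗ LinearMap.mul' k H ∘ₗ
            TensorProduct.map LinearMap.id (HopfAlgebra.antipode (R := k)) ∘ₗ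
            (TensorProduct.comm k H H).toLinearMap) ∘ₗ
        (TensorProduct.leftComm k H H H).toLinearMap ∘ₗ
        (TensorProduct.assoc k H H H).toLinearMap ∘ₗ
        TensorProduct.map Coalgebra.comul LinearMap.id := by
  apply TensorProduct.ext'
  intro h x
  set c : Coalgebra.Repr k x (H × H) := ℛ k x with hc
  set r : Coalgebra.Repr k h (H × H) := ℛ k h with hr
  set s : (i : r.ι) → Coalgebra.Repr k (r.left i) (H × H) := fun i => ℛ k (r.left i) with hs
  simp only [LinearMap.coe_comp, Function.comp_apply, LinearEquiv.coe_coe,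
    TensorProduct.map_tmul, LinearMap.id_coe, id_eq]
  rw [← c.eq, ← r.eq]
  simp only [TensorProduct.tmul_sum, TensorProduct.sum_tmul, map_sum,
    TensorProduct.leftComm_tmul, TensorProduct.assoc_tmul, TensorProduct.map_tmul,
    TensorProduct.comm_tmul, LinearMap.mul'_apply, TensorProduct.rid_tmul,
    LinearMap.coe_comp, Function.comp_apply, LinearEquiv.coe_coe,
    LinearMap.id_coe, id_eq]
  have key : ∀ i ∈ r.index,
      ζ (x * HopfAlgebra.antipode (R := k) (r.left i)) • r.right i =
      ∑ p ∈ c.index, ∑ j ∈ (s i).index,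
        ζ (c.right p * HopfAlgebra.antipode (R := k) ((s i).left j)) •
          (c.left p * (HopfAlgebra.antipode (R := k) ((s i).right j) * r.right i)) := by
    intro i _
    have e1 : ζ (x * HopfAlgebra.antipode (R := k) (r.left i)) • r.right i =
        (TensorProduct.rid k H) ((LinearMap.lTensor H ζ)
          (Coalgebra.comul (R := k)
            (x * HopfAlgebra.antipode (R := k) (r.left i)))) * r.right i := by
      rw [KK ζ hint, smul_mul_assoc, one_mul]
    rw [e1, Bialgebra.comul_mul, comul_antipode (r.left i), ← c.eq, ← (s i).eq]
    simp only [map_sum, TensorProduct.map_tmul, TensorProduct.comm_tmul,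
      Finset.sum_mul, Finset.mul_sum, Algebra.TensorProduct.tmul_mul_tmul,
      LinearMap.lTensor_tmul, TensorProduct.rid_tmul, smul_mul_assoc, mul_assoc]
    rw [Finset.sum_comm]
  rw [Finset.sum_congr rfl key, Finset.sum_comm]
  have fin : ∀ p ∈ c.index,
      (∑ i ∈ r.index, ∑ j ∈ (s i).index,
        ζ (c.right p * HopfAlgebra.antipode (R := k) ((s i).left j)) •
          (c.left p * (HopfAlgebra.antipode (R := k) ((s i).right j) * r.right i))) =
      ζ (c.right p * HopfAlgebra.antipode (R := k) h) • c.left p :=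
    fun p _ => CL ζ (c.left p) (c.right p) h r s
  rw [Finset.sum_congr rfl fin]
end
end

section
/- Let H be a finite-dimensional Hopf algebra with bijective antipode, ζ a nonzero left integral for H*, v(h)=ζ(·S(h)), and w(h)=(S⁻¹)*(v(h)), i.e. w(h)(k)=ζ(S⁻¹(k)S(h)). Then for all h,k∈H: Σ⟨w(h), k₁⟩ S⁻¹(k₂) = Σ⟨w(h₁), k⟩ h₂, and equivalently Σ⟨w(h), k₁⟩ k₂ = Σ⟨w(h₁), k⟩ S(h₂). -/
open TensorProduct Coalgebra HopfAlgebra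

noncomputable section

variable (k H : Type) [Field k] [Ring H] [HopfAlgebra k H]

variable {k H}

def cvB {B : Type} [Ring B] [Algebra k B] (f g : H →ₗ[k] B) : H →ₗ[k] B :=
  LinearMap.mul' k B ∘ₗ TensorProduct.map f g ∘ₗ Coalgebra.comul

lemma cvB_repr {B : Type} [Ring B] [Algebra k B] (f g : H →ₗ[k] B) (x : H)
    (r : Coalgebra.Repr k x (H × H)) :
    cvB f g x = ∑ i ∈ r.index, f (r.left i) * g (r.right i) := by
  simp [cvB, ← r.eq, map_sum]

lemma sum_smul_counit (x : H) (r : Coalgebra.Repr k x (H × H)) :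
    ∑ i ∈ r.index, Coalgebra.counit (R := k) (r.right i) • r.left i = x := by
  have h := congrArg (TensorProduct.rid k H) (Coalgebra.sum_tmul_counit_eq r)
  simp only [map_sum, TensorProduct.rid_tmul] at h
  simpa using h

lemma sum_counit_smul (x : H) (r : Coalgebra.Repr k x (H × H)) :
    ∑ i ∈ r.index, Coalgebra.counit (R := k) (r.left i) • r.right i = x := by
  have h := congrArg (TensorProduct.lid k H) (Coalgebra.sum_counit_tmul_eq r)
  simp only [map_sum, TensorProduct.lid_tmul] at h
  simpa using h

lemma cvB_counit_right {B : Type} [Ring B] [Algebra k B] (f : H →ₗ[k] B) :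
    cvB f (Algebra.linearMap k B ∘ₗ Coalgebra.counit) = f := by
  ext x
  have r := Coalgebra.Repr.arbitrary k x
  rw [cvB_repr _ _ x r]
  calc ∑ i ∈ r.index, f (r.left i) * (Algebra.linearMap k B ∘ₗ Coalgebra.counit) (r.right i)
      = ∑ i ∈ r.index, f (Coalgebra.counit (R := k) (r.right i) • r.left i) := by
        refine Finset.sum_congr rfl fun i _ => ?_
        rw [LinearMap.comp_apply, Algebra.linearMap_apply, map_smul, Algebra.smul_def]
        exact (Algebra.commutes _ _).symm
    _ = f x := by rw [← map_sum, sum_smul_counit x r]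

lemma cvB_counit_left {B : Type} [Ring B] [Algebra k B] (f : H →ₗ[k] B) :
    cvB (Algebra.linearMap k B ∘ₗ Coalgebra.counit) f = f := by
  ext x
  have r := Coalgebra.Repr.arbitrary k x
  rw [cvB_repr _ _ x r]
  calc ∑ i ∈ r.index, (Algebra.linearMap k B ∘ₗ Coalgebra.counit) (r.left i) * f (r.right i)
      = ∑ i ∈ r.index, f (Coalgebra.counit (R := k) (r.left i) • r.right i) := by
        refine Finset.sum_congr rfl fun i _ => ?_
        rw [LinearMap.comp_apply, Algebra.linearMap_apply, map_smul, Algebra.smul_def]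
    _ = f x := by rw [← map_sum, sum_counit_smul x r]

lemma cvB_assoc {B : Type} [Ring B] [Algebra k B] (f g h : H →ₗ[k] B) :
    cvB (cvB f g) h = cvB f (cvB g h) := by
  ext x
  have r := Coalgebra.Repr.arbitrary k x
  have a₁ : ∀ i : H × H, Coalgebra.Repr k (r.left i) (H × H) := fun i => Coalgebra.Repr.arbitrary k _
  have a₂ : ∀ i : H × H, Coalgebra.Repr k (r.right i) (H × H) := fun i => Coalgebra.Repr.arbitrary k _
  have key := congrArg (LinearMap.mul' k B ∘ₗ
      TensorProduct.map f (LinearMap.mul' k B ∘ₗ TensorProduct.map g h))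
    (Coalgebra.sum_tmul_tmul_eq r a₁ a₂)
  simp only [map_sum, LinearMap.comp_apply, TensorProduct.map_tmul,
    LinearMap.mul'_apply] at key
  rw [cvB_repr (cvB f g) h x r, cvB_repr f (cvB g h) x r]
  calc ∑ i ∈ r.index, cvB f g (r.left i) * h (r.right i)
      = ∑ i ∈ r.index, ∑ j ∈ (a₁ i).index,
          f ((a₁ i).left j) * (g ((a₁ i).right j) * h (r.right i)) := by
        refine Finset.sum_congr rfl fun i _ => ?_
        rw [cvB_repr f g _ (a₁ i), Finset.sum_mul]
        exact Finset.sum_congr rfl fun j _ => mul_assoc _ _ _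
    _ = ∑ i ∈ r.index, ∑ j ∈ (a₂ i).index,
          f (r.left i) * (g ((a₂ i).left j) * h ((a₂ i).right j)) := key
    _ = ∑ i ∈ r.index, f (r.left i) * cvB g h (r.right i) := by
        refine Finset.sum_congr rfl fun i _ => ?_
        rw [cvB_repr g h _ (a₂ i), Finset.mul_sum]

/-- `Δ ∗ (Δ∘S) = u∘ε` in the convolution algebra `Hom(H, H⊗H)`. -/
lemma comul_conv_comulS :
    cvB (Coalgebra.comul (R := k) (A := H))
        (Coalgebra.comul ∘ₗ HopfAlgebra.antipode (R := k))
      = Algebra.linearMap k (H ⊗[k] H) ∘ₗ Coalgebra.counit := by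
  ext x
  have r := Coalgebra.Repr.arbitrary k x
  rw [cvB_repr _ _ x r]
  calc ∑ i ∈ r.index, Coalgebra.comul (R := k) (r.left i) *
        (Coalgebra.comul ∘ₗ HopfAlgebra.antipode (R := k)) (r.right i)
      = Coalgebra.comul (∑ i ∈ r.index, r.left i * antipode (R := k) (r.right i)) := by
        rw [map_sum]
        exact Finset.sum_congr rfl fun i _ => (Bialgebra.comul_mul _ _).symm
    _ = (Algebra.linearMap k (H ⊗[k] H) ∘ₗ Coalgebra.counit) x := by
        rw [HopfAlgebra.sum_mul_antipode_eq_algebraMap_counit r]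
        simp [Algebra.TensorProduct.algebraMap_apply]

/-- `(τ∘(S⊗S)∘Δ) ∗ Δ = u∘ε` in the convolution algebra `Hom(H, H⊗H)`. -/
lemma swap_comul_conv_comul :
    cvB ((TensorProduct.comm k H H).toLinearMap ∘ₗ
          TensorProduct.map (HopfAlgebra.antipode (R := k)) (HopfAlgebra.antipode (R := k)) ∘ₗ
          Coalgebra.comul)
        (Coalgebra.comul (R := k) (A := H))
      = Algebra.linearMap k (H ⊗[k] H) ∘ₗ Coalgebra.counit := by
  ext x
  have r := Coalgebra.Repr.arbitrary k x
  have a₁ : ∀ i : H × H, Coalgebra.Repr k (r.left i) (H × H) := fun i => Coalgebra.Repr.arbitrary k _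
  have a₂ : ∀ i : H × H, Coalgebra.Repr k (r.right i) (H × H) := fun i => Coalgebra.Repr.arbitrary k _
  have b₁ : ∀ (i : H × H) (m : H × H), Coalgebra.Repr k ((a₂ i).left m) (H × H) :=
    fun i m => Coalgebra.Repr.arbitrary k _
  have b₂ : ∀ (i : H × H) (m : H × H), Coalgebra.Repr k ((a₂ i).right m) (H × H) :=
    fun i m => Coalgebra.Repr.arbitrary k _
  set T : H ⊗[k] (H ⊗[k] H) →ₗ[k] H ⊗[k] H :=
    LinearMap.mul' k (H ⊗[k] H) ∘ₗ
      TensorProduct.map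
        ((TensorProduct.comm k H H).toLinearMap ∘ₗ
          TensorProduct.map (HopfAlgebra.antipode (R := k)) (HopfAlgebra.antipode (R := k)))
        Coalgebra.comul ∘ₗ
      (TensorProduct.assoc k H H H).symm.toLinearMap with hT
  have step2 := congrArg T (Coalgebra.sum_tmul_tmul_eq r a₁ a₂)
  simp only [hT, map_sum, LinearMap.comp_apply, LinearEquiv.coe_coe,
    TensorProduct.assoc_symm_tmul, TensorProduct.map_tmul,
    TensorProduct.comm_tmul, LinearMap.mul'_apply] at step2
  have step3 : ∀ i ∈ r.index, ∑ m ∈ (a₂ i).index,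
      (antipode (R := k) ((a₂ i).left m) ⊗ₜ[k] antipode (R := k) (r.left i)) *
        Coalgebra.comul ((a₂ i).right m)
      = (1 : H) ⊗ₜ[k] (antipode (R := k) (r.left i) * r.right i) := by
    intro i _
    have key := congrArg (TensorProduct.map
        (LinearMap.mul' k H ∘ₗ LinearMap.rTensor H (HopfAlgebra.antipode (R := k)))
        (LinearMap.mulLeft k (antipode (R := k) (r.left i))) ∘ₗ
        (TensorProduct.assoc k H H H).symm.toLinearMap)
      (Coalgebra.sum_tmul_tmul_eq (a₂ i) (b₁ i) (b₂ i))
    simp only [map_sum, LinearMap.comp_apply, LinearEquiv.coe_coe,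
      TensorProduct.assoc_symm_tmul, TensorProduct.map_tmul, LinearMap.rTensor_tmul,
      LinearMap.mul'_apply, LinearMap.mulLeft_apply] at key
    calc ∑ m ∈ (a₂ i).index,
        (antipode (R := k) ((a₂ i).left m) ⊗ₜ[k] antipode (R := k) (r.left i)) *
          Coalgebra.comul ((a₂ i).right m)
        = ∑ m ∈ (a₂ i).index, ∑ n ∈ (b₂ i m).index,
            (antipode (R := k) ((a₂ i).left m) * (b₂ i m).left n) ⊗ₜ[k]
              (antipode (R := k) (r.left i) * (b₂ i m).right n) := by
          refine Finset.sum_congr rfl fun m _ => ?_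
          rw [← (b₂ i m).eq, Finset.mul_sum]
          exact Finset.sum_congr rfl fun n _ => Algebra.TensorProduct.tmul_mul_tmul _ _ _ _
      _ = ∑ m ∈ (a₂ i).index, ∑ j ∈ (b₁ i m).index,
            (antipode (R := k) ((b₁ i m).left j) * (b₁ i m).right j) ⊗ₜ[k]
              (antipode (R := k) (r.left i) * (a₂ i).right m) := key.symm
      _ = ∑ m ∈ (a₂ i).index, Coalgebra.counit (R := k) ((a₂ i).left m) •
            ((1 : H) ⊗ₜ[k] (antipode (R := k) (r.left i) * (a₂ i).right m)) := by
          refine Finset.sum_congr rfl fun m _ => ?_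
          rw [← TensorProduct.sum_tmul, HopfAlgebra.sum_antipode_mul_eq_smul (b₁ i m),
            TensorProduct.smul_tmul']
      _ = (1 : H) ⊗ₜ[k] (antipode (R := k) (r.left i) *
            ∑ m ∈ (a₂ i).index, Coalgebra.counit (R := k) ((a₂ i).left m) • (a₂ i).right m) := by
          rw [Finset.mul_sum, TensorProduct.tmul_sum]
          exact Finset.sum_congr rfl fun m _ => by rw [mul_smul_comm, TensorProduct.tmul_smul]
      _ = (1 : H) ⊗ₜ[k] (antipode (R := k) (r.left i) * r.right i) := by
          rw [sum_counit_smul _ (a₂ i)]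
  calc cvB ((TensorProduct.comm k H H).toLinearMap ∘ₗ
          TensorProduct.map (HopfAlgebra.antipode (R := k)) (HopfAlgebra.antipode (R := k)) ∘ₗ
          Coalgebra.comul) (Coalgebra.comul (R := k) (A := H)) x
      = ∑ i ∈ r.index, ∑ j ∈ (a₁ i).index,
          (antipode (R := k) ((a₁ i).right j) ⊗ₜ[k] antipode (R := k) ((a₁ i).left j)) *
            Coalgebra.comul (r.right i) := by
        rw [cvB_repr _ _ x r]
        refine Finset.sum_congr rfl fun i _ => ?_
        rw [LinearMap.comp_apply, LinearMap.comp_apply, ← (a₁ i).eq]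
        simp only [map_sum, TensorProduct.map_tmul, LinearEquiv.coe_coe,
          TensorProduct.comm_tmul, Finset.sum_mul]
    _ = ∑ i ∈ r.index, ∑ m ∈ (a₂ i).index,
          (antipode (R := k) ((a₂ i).left m) ⊗ₜ[k] antipode (R := k) (r.left i)) *
            Coalgebra.comul ((a₂ i).right m) := step2
    _ = ∑ i ∈ r.index, (1 : H) ⊗ₜ[k] (antipode (R := k) (r.left i) * r.right i) :=
        Finset.sum_congr rfl step3
    _ = (Algebra.linearMap k (H ⊗[k] H) ∘ₗ Coalgebra.counit) x := by
        rw [← TensorProduct.tmul_sum, HopfAlgebra.sum_antipode_mul_eq_algebraMap_counit r]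
        simp only [LinearMap.comp_apply, Algebra.linearMap_apply,
          Algebra.TensorProduct.algebraMap_apply]
        rw [Algebra.algebraMap_eq_smul_one, TensorProduct.tmul_smul, TensorProduct.smul_tmul']

/-- `Δ ∘ S = τ ∘ (S ⊗ S) ∘ Δ`. -/
lemma comul_antipode_eq :
    Coalgebra.comul ∘ₗ HopfAlgebra.antipode (R := k) (A := H)
      = (TensorProduct.comm k H H).toLinearMap ∘ₗ
          TensorProduct.map (HopfAlgebra.antipode (R := k)) (HopfAlgebra.antipode (R := k)) ∘ₗ
          Coalgebra.comul := by
  have h1 := comul_conv_comulS (k := k) (H := H)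
  have h2 := swap_comul_conv_comul (k := k) (H := H)
  calc Coalgebra.comul ∘ₗ HopfAlgebra.antipode (R := k) (A := H)
      = cvB (Algebra.linearMap k (H ⊗[k] H) ∘ₗ Coalgebra.counit)
          (Coalgebra.comul ∘ₗ HopfAlgebra.antipode (R := k)) := (cvB_counit_left _).symm
    _ = cvB (cvB ((TensorProduct.comm k H H).toLinearMap ∘ₗ
            TensorProduct.map (HopfAlgebra.antipode (R := k)) (HopfAlgebra.antipode (R := k)) ∘ₗ
            Coalgebra.comul) Coalgebra.comul)
          (Coalgebra.comul ∘ₗ HopfAlgebra.antipode (R := k)) := by rw [h2]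
    _ = cvB ((TensorProduct.comm k H H).toLinearMap ∘ₗ
            TensorProduct.map (HopfAlgebra.antipode (R := k)) (HopfAlgebra.antipode (R := k)) ∘ₗ
            Coalgebra.comul)
          (cvB Coalgebra.comul (Coalgebra.comul ∘ₗ HopfAlgebra.antipode (R := k))) :=
        cvB_assoc _ _ _
    _ = (TensorProduct.comm k H H).toLinearMap ∘ₗ
          TensorProduct.map (HopfAlgebra.antipode (R := k)) (HopfAlgebra.antipode (R := k)) ∘ₗ
          Coalgebra.comul := by rw [h1, cvB_counit_right]

lemma comul_antipode_repr (x : H) (r : Coalgebra.Repr k x (H × H)) :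
    Coalgebra.comul (R := k) (antipode (R := k) x)
      = ∑ i ∈ r.index, antipode (R := k) (r.right i) ⊗ₜ[k] antipode (R := k) (r.left i) := by
  have h := LinearMap.congr_fun (comul_antipode_eq (k := k) (H := H)) x
  simp only [LinearMap.comp_apply] at h
  rw [h, ← r.eq]
  simp [map_sum]

lemma comul_Sinv (Sinv : H →ₗ[k] H)
    (hS : Sinv ∘ₗ HopfAlgebra.antipode (R := k) = LinearMap.id ∧
      HopfAlgebra.antipode (R := k) ∘ₗ Sinv = LinearMap.id)
    (x : H) (r : Coalgebra.Repr k x (H × H)) :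
    Coalgebra.comul (R := k) (Sinv x)
      = ∑ i ∈ r.index, Sinv (r.right i) ⊗ₜ[k] Sinv (r.left i) := by
  have e2 : antipode (R := k) (Sinv x) = x := by
    have := LinearMap.congr_fun hS.2 x; simpa using this
  have e1 : Coalgebra.comul (R := k) x
      = (TensorProduct.comm k H H)
          (TensorProduct.map (antipode (R := k)) (antipode (R := k))
            (Coalgebra.comul (Sinv x))) := by
    have h := LinearMap.congr_fun (comul_antipode_eq (k := k) (H := H)) (Sinv x)
    simp only [LinearMap.comp_apply, LinearEquiv.coe_coe] at h
    rw [← h, e2]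
  have e3 : TensorProduct.map (antipode (R := k)) (antipode (R := k))
        (Coalgebra.comul (R := k) (Sinv x))
      = (TensorProduct.comm k H H).symm (Coalgebra.comul (R := k) x) := by
    rw [e1, LinearEquiv.symm_apply_apply]
  have e4 := congrArg (TensorProduct.map Sinv Sinv) e3
  have e5 : TensorProduct.map Sinv Sinv ∘ₗ
      TensorProduct.map (antipode (R := k) (A := H)) (antipode (R := k)) = LinearMap.id := by
    rw [← TensorProduct.map_comp, hS.1, TensorProduct.map_id]
  rw [← LinearMap.comp_apply, e5, LinearMap.id_apply] at e4
  rw [e4, ← r.eq, map_sum, map_sum]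
  simp [TensorProduct.comm_symm_tmul]

lemma integral_repr (ζ : H →ₗ[k] k)
    (hint : ∀ ξ : H →ₗ[k] k, conv k ξ ζ = ξ 1 • ζ)
    {ι : Type*} (F : Finset ι) (L R : ι → H) (x : H)
    (hx : Coalgebra.comul (R := k) x = ∑ s ∈ F, L s ⊗ₜ[k] R s) :
    ∑ s ∈ F, ζ (R s) • L s = ζ x • (1 : H) := by
  rw [← sub_eq_zero]
  refine (Module.forall_dual_apply_eq_zero_iff k _).mp fun ξ => ?_
  have h := LinearMap.congr_fun (hint ξ) x
  simp only [conv, LinearMap.comp_apply, hx, map_sum, TensorProduct.map_tmul,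
    LinearMap.mul'_apply, LinearMap.smul_apply, smul_eq_mul] at h
  simp only [map_sub, map_sum, map_smul, smul_eq_mul, sub_eq_zero]
  calc ∑ s ∈ F, ζ (R s) * ξ (L s) = ∑ s ∈ F, ξ (L s) * ζ (R s) :=
        Finset.sum_congr rfl fun s _ => mul_comm _ _
    _ = ξ 1 * ζ x := h
    _ = ζ x * ξ 1 := mul_comm _ _

set_option maxHeartbeats 1000000 in
lemma key_identity (ζ : H →ₗ[k] k)
    (hint : ∀ ξ : H →ₗ[k] k, conv k ξ ζ = ξ 1 • ζ)
    (Sinv : H →ₗ[k] H)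
    (hS : Sinv ∘ₗ HopfAlgebra.antipode (R := k) = LinearMap.id ∧
      HopfAlgebra.antipode (R := k) ∘ₗ Sinv = LinearMap.id)
    (h y : H) (rk : Coalgebra.Repr k y (H × H)) (rh : Coalgebra.Repr k h (H × H)) :
    ∑ i ∈ rk.index, ζ (Sinv (rk.left i) * antipode (R := k) h) • Sinv (rk.right i)
      = ∑ j ∈ rh.index, ζ (Sinv y * antipode (R := k) (rh.left j)) • rh.right j := by
  have ra : ∀ j : H × H, Coalgebra.Repr k (rh.left j) (H × H) := fun j => Coalgebra.Repr.arbitrary k _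
  have rb : ∀ j : H × H, Coalgebra.Repr k (rh.right j) (H × H) := fun j => Coalgebra.Repr.arbitrary k _
  -- Step A : integral applied to Sinv y * S (rh.left j)
  have intJ : ∀ j : H × H,
      ∑ s ∈ rk.index ×ˢ (ra j).index,
        ζ (Sinv (rk.left s.1) * antipode (R := k) ((ra j).left s.2)) •
          (Sinv (rk.right s.1) * antipode (R := k) ((ra j).right s.2))
      = ζ (Sinv y * antipode (R := k) (rh.left j)) • (1 : H) := by
    intro j
    refine integral_repr ζ hint (rk.index ×ˢ (ra j).index)
      (fun s => Sinv (rk.right s.1) * antipode (R := k) ((ra j).right s.2))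
      (fun s => Sinv (rk.left s.1) * antipode (R := k) ((ra j).left s.2)) _ ?_
    rw [Bialgebra.comul_mul, comul_Sinv Sinv hS y rk, comul_antipode_repr _ (ra j),
      Finset.sum_mul_sum]
    rw [Finset.sum_product]
    exact Finset.sum_congr rfl fun i _ => Finset.sum_congr rfl fun m _ =>
      Algebra.TensorProduct.tmul_mul_tmul _ _ _ _
  -- Step B : re-association of the triple coproduct of h
  have stepB : ∀ i : H × H,
      ∑ j ∈ rh.index, ∑ m ∈ (ra j).index,
        ζ (Sinv (rk.left i) * antipode (R := k) ((ra j).left m)) •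
          (Sinv (rk.right i) * (antipode (R := k) ((ra j).right m) * rh.right j))
      = ∑ j ∈ rh.index, ∑ n ∈ (rb j).index,
        ζ (Sinv (rk.left i) * antipode (R := k) (rh.left j)) •
          (Sinv (rk.right i) * (antipode (R := k) ((rb j).left n) * (rb j).right n)) := by
    intro i
    have key := congrArg ((TensorProduct.lid k H).toLinearMap ∘ₗ
        TensorProduct.map
          (ζ ∘ₗ LinearMap.mulLeft k (Sinv (rk.left i)) ∘ₗ HopfAlgebra.antipode (R := k))
          (LinearMap.mulLeft k (Sinv (rk.right i)) ∘ₗ LinearMap.mul' k H ∘ₗ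
            LinearMap.rTensor H (HopfAlgebra.antipode (R := k))))
      (Coalgebra.sum_tmul_tmul_eq rh ra rb)
    simpa only [map_sum, LinearMap.comp_apply, LinearEquiv.coe_coe, TensorProduct.map_tmul,
      TensorProduct.lid_tmul, LinearMap.mulLeft_apply, LinearMap.mul'_apply,
      LinearMap.rTensor_tmul] using key
  calc ∑ i ∈ rk.index, ζ (Sinv (rk.left i) * antipode (R := k) h) • Sinv (rk.right i)
      = ∑ i ∈ rk.index, ∑ j ∈ rh.index, ∑ n ∈ (rb j).index,
          ζ (Sinv (rk.left i) * antipode (R := k) (rh.left j)) •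
            (Sinv (rk.right i) * (antipode (R := k) ((rb j).left n) * (rb j).right n)) := by
        refine Finset.sum_congr rfl fun i _ => ?_
        have e : ζ (Sinv (rk.left i) * antipode (R := k) h)
            = ∑ j ∈ rh.index, Coalgebra.counit (R := k) (rh.right j) •
                ζ (Sinv (rk.left i) * antipode (R := k) (rh.left j)) := by
          have e0 := congrArg (ζ ∘ₗ LinearMap.mulLeft k (Sinv (rk.left i)) ∘ₗ
            HopfAlgebra.antipode (R := k)) (sum_smul_counit h rh).symm
          simpa only [map_sum, map_smul, LinearMap.comp_apply, LinearMap.mulLeft_apply]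
            using e0
        calc ζ (Sinv (rk.left i) * antipode (R := k) h) • Sinv (rk.right i)
            = ∑ j ∈ rh.index, Coalgebra.counit (R := k) (rh.right j) •
                (ζ (Sinv (rk.left i) * antipode (R := k) (rh.left j)) • Sinv (rk.right i)) := by
              rw [e, Finset.sum_smul]
              exact Finset.sum_congr rfl fun j _ => smul_assoc _ _ _
          _ = ∑ j ∈ rh.index, ∑ n ∈ (rb j).index,
                ζ (Sinv (rk.left i) * antipode (R := k) (rh.left j)) •
                  (Sinv (rk.right i) * (antipode (R := k) ((rb j).left n) * (rb j).right n)) := by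
              refine Finset.sum_congr rfl fun j _ => ?_
              rw [← Finset.smul_sum, ← Finset.mul_sum,
                HopfAlgebra.sum_antipode_mul_eq_smul (rb j), mul_smul_comm, mul_one,
                smul_comm]
    _ = ∑ i ∈ rk.index, ∑ j ∈ rh.index, ∑ m ∈ (ra j).index,
          ζ (Sinv (rk.left i) * antipode (R := k) ((ra j).left m)) •
            (Sinv (rk.right i) * (antipode (R := k) ((ra j).right m) * rh.right j)) := by
        exact Finset.sum_congr rfl fun i _ => (stepB i).symm
    _ = ∑ j ∈ rh.index, ζ (Sinv y * antipode (R := k) (rh.left j)) • rh.right j := by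
        rw [Finset.sum_comm]
        refine Finset.sum_congr rfl fun j _ => ?_
        have := congrArg (· * rh.right j) (intJ j)
        simp only [Finset.sum_mul, smul_mul_assoc, one_mul, Finset.sum_product] at this
        rw [← this]
        exact Finset.sum_congr rfl fun i _ => Finset.sum_congr rfl fun m _ =>
          congrArg _ (mul_assoc _ _ _).symm

/-- with `w(h) = ζ(S⁻¹(–)·S(h))` for a nonzero left integral ζ of `H*`,
`Σ ⟨w(h),k₁⟩ S⁻¹(k₂) = Σ ⟨w(h₁),k⟩ h₂` and `Σ ⟨w(h),k₁⟩ k₂ = Σ ⟨w(h₁),k⟩ S(h₂)`,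
as equalities of linear maps `H ⊗ H → H` (first slot `h`, second slot `k`). -/
theorem stmt7 [FiniteDimensional k H] (ζ : H →ₗ[k] k) (hζ : ζ ≠ 0)
    (hint : ∀ ξ : H →ₗ[k] k, conv k ξ ζ = ξ 1 • ζ)
    (Sinv : H →ₗ[k] H)
    (hS : Sinv ∘ₗ HopfAlgebra.antipode (R := k) = LinearMap.id ∧
      HopfAlgebra.antipode (R := k) ∘ₗ Sinv = LinearMap.id) :
    (let W2 : H ⊗[k] H →ₗ[k] k :=
      ζ ∘ₗ LinearMap.mul' k H ∘ₗ
        TensorProduct.map Sinv (HopfAlgebra.antipode (R := k)) ∘ₗ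
        (TensorProduct.comm k H H).toLinearMap
    ((TensorProduct.lid k H).toLinearMap ∘ₗ TensorProduct.map W2 Sinv ∘ₗ
        (TensorProduct.assoc k H H H).symm.toLinearMap ∘ₗ
        TensorProduct.map LinearMap.id Coalgebra.comul
      =
      (TensorProduct.rid k H).toLinearMap ∘ₗ TensorProduct.map LinearMap.id W2 ∘ₗ
        (TensorProduct.leftComm k H H H).toLinearMap ∘ₗ
        (TensorProduct.assoc k H H H).toLinearMap ∘ₗ
        TensorProduct.map Coalgebra.comul LinearMap.id) ∧
    ((TensorProduct.lid k H).toLinearMap ∘ₗ TensorProduct.map W2 LinearMap.id ∘ₗ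
        (TensorProduct.assoc k H H H).symm.toLinearMap ∘ₗ
        TensorProduct.map LinearMap.id Coalgebra.comul
      =
      (TensorProduct.rid k H).toLinearMap ∘ₗ
        TensorProduct.map (HopfAlgebra.antipode (R := k)) W2 ∘ₗ
        (TensorProduct.leftComm k H H H).toLinearMap ∘ₗ
        (TensorProduct.assoc k H H H).toLinearMap ∘ₗ
        TensorProduct.map Coalgebra.comul LinearMap.id)) := by
  refine ⟨?_, ?_⟩
  · -- first identity
    apply TensorProduct.ext'
    intro h y
    have rk := Coalgebra.Repr.arbitrary k y
    have rh := Coalgebra.Repr.arbitrary k h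
    have L1 : ((TensorProduct.lid k H).toLinearMap ∘ₗ
        TensorProduct.map (ζ ∘ₗ LinearMap.mul' k H ∘ₗ
          TensorProduct.map Sinv (HopfAlgebra.antipode (R := k)) ∘ₗ
          (TensorProduct.comm k H H).toLinearMap) Sinv ∘ₗ
        (TensorProduct.assoc k H H H).symm.toLinearMap ∘ₗ
        TensorProduct.map LinearMap.id Coalgebra.comul) (h ⊗ₜ[k] y)
        = ∑ i ∈ rk.index,
            ζ (Sinv (rk.left i) * antipode (R := k) h) • Sinv (rk.right i) := by
      simp only [LinearMap.comp_apply, TensorProduct.map_tmul, LinearMap.id_coe, id_eq]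
      rw [← rk.eq, TensorProduct.tmul_sum]
      simp only [map_sum, LinearEquiv.coe_coe, TensorProduct.assoc_symm_tmul,
        TensorProduct.map_tmul, LinearMap.comp_apply, TensorProduct.comm_tmul,
        LinearMap.mul'_apply, TensorProduct.lid_tmul]
    have R1 : ((TensorProduct.rid k H).toLinearMap ∘ₗ
        TensorProduct.map LinearMap.id (ζ ∘ₗ LinearMap.mul' k H ∘ₗ
          TensorProduct.map Sinv (HopfAlgebra.antipode (R := k)) ∘ₗ
          (TensorProduct.comm k H H).toLinearMap) ∘ₗ
        (TensorProduct.leftComm k H H H).toLinearMap ∘ₗ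
        (TensorProduct.assoc k H H H).toLinearMap ∘ₗ
        TensorProduct.map Coalgebra.comul LinearMap.id) (h ⊗ₜ[k] y)
        = ∑ j ∈ rh.index,
            ζ (Sinv y * antipode (R := k) (rh.left j)) • rh.right j := by
      simp only [LinearMap.comp_apply, TensorProduct.map_tmul, LinearMap.id_coe, id_eq]
      rw [← rh.eq, TensorProduct.sum_tmul]
      simp only [map_sum, LinearEquiv.coe_coe, TensorProduct.assoc_tmul,
        TensorProduct.leftComm_tmul, TensorProduct.map_tmul, LinearMap.comp_apply,
        TensorProduct.comm_tmul, LinearMap.mul'_apply, TensorProduct.rid_tmul,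
        LinearMap.id_coe, id_eq]
    rw [L1, R1]
    exact key_identity ζ hint Sinv hS h y rk rh
  · -- second identity
    apply TensorProduct.ext'
    intro h y
    have rk := Coalgebra.Repr.arbitrary k y
    have rh := Coalgebra.Repr.arbitrary k h
    have L2 : ((TensorProduct.lid k H).toLinearMap ∘ₗ
        TensorProduct.map (ζ ∘ₗ LinearMap.mul' k H ∘ₗ
          TensorProduct.map Sinv (HopfAlgebra.antipode (R := k)) ∘ₗ
          (TensorProduct.comm k H H).toLinearMap) LinearMap.id ∘ₗ
        (TensorProduct.assoc k H H H).symm.toLinearMap ∘ₗ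
        TensorProduct.map LinearMap.id Coalgebra.comul) (h ⊗ₜ[k] y)
        = ∑ i ∈ rk.index,
            ζ (Sinv (rk.left i) * antipode (R := k) h) • rk.right i := by
      simp only [LinearMap.comp_apply, TensorProduct.map_tmul, LinearMap.id_coe, id_eq]
      rw [← rk.eq, TensorProduct.tmul_sum]
      simp only [map_sum, LinearEquiv.coe_coe, TensorProduct.assoc_symm_tmul,
        TensorProduct.map_tmul, LinearMap.comp_apply, TensorProduct.comm_tmul,
        LinearMap.mul'_apply, TensorProduct.lid_tmul, LinearMap.id_coe, id_eq]
    have R2 : ((TensorProduct.rid k H).toLinearMap ∘ₗ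
        TensorProduct.map (HopfAlgebra.antipode (R := k)) (ζ ∘ₗ LinearMap.mul' k H ∘ₗ
          TensorProduct.map Sinv (HopfAlgebra.antipode (R := k)) ∘ₗ
          (TensorProduct.comm k H H).toLinearMap) ∘ₗ
        (TensorProduct.leftComm k H H H).toLinearMap ∘ₗ
        (TensorProduct.assoc k H H H).toLinearMap ∘ₗ
        TensorProduct.map Coalgebra.comul LinearMap.id) (h ⊗ₜ[k] y)
        = ∑ j ∈ rh.index,
            ζ (Sinv y * antipode (R := k) (rh.left j)) •
              antipode (R := k) (rh.right j) := by
      simp only [LinearMap.comp_apply, TensorProduct.map_tmul, LinearMap.id_coe, id_eq]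
      rw [← rh.eq, TensorProduct.sum_tmul]
      simp only [map_sum, LinearEquiv.coe_coe, TensorProduct.assoc_tmul,
        TensorProduct.leftComm_tmul, TensorProduct.map_tmul, LinearMap.comp_apply,
        TensorProduct.comm_tmul, LinearMap.mul'_apply, TensorProduct.rid_tmul,
        LinearMap.id_coe, id_eq]
    rw [L2, R2]
    have e := congrArg (HopfAlgebra.antipode (R := k))
      (key_identity ζ hint Sinv hS h y rk rh)
    have hsv : ∀ x : H, antipode (R := k) (Sinv x) = x := fun x => by
      have := LinearMap.congr_fun hS.2 x; simpa using this
    simp only [map_sum, map_smul, hsv] at e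
    exact e
end
end

section
/- Let α∈k be invertible, γ∈kⁿ, B∈Mₙ(k), and Γ the matrix with entries Γᵢⱼ=γᵢγⱼ. The system of equations (z−α⁻¹x)·γ=2y, B(αz−x)=−yγ, B(αz+x)=−(y+α⁻¹(x·γ))γ in unknowns y∈k, x,z∈kⁿ has a nontrivial solution if and only if the matrix 2αB+Γ is singular. -/
open Matrix

lemma vecMulVec_mulVec_eq {k : Type} [Field k] {n : ℕ} (γ v : Fin n → k) :
    (Matrix.vecMulVec γ γ).mulVec v = (γ ⬝ᵥ v) • γ := by
  funext i
  simp [Matrix.mulVec, Matrix.vecMulVec_apply, dotProduct, Finset.mul_sum,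
    mul_comm, mul_assoc, mul_left_comm]

/-- the system `(z−α⁻¹x)·γ = 2y`, `B(αz−x) = −yγ`,
`B(αz+x) = −(y+α⁻¹(x·γ))γ` has a nontrivial solution `(y,x,z)` iff `2αB+Γ` is
singular, where `Γᵢⱼ = γᵢγⱼ`. -/
theorem stmt14 {k : Type} [Field k] (hchar : (2 : k) ≠ 0)
    (n : ℕ) (α : k) (hα : α ≠ 0) (γ : Fin n → k) (B : Matrix (Fin n) (Fin n) k) :
    (∃ (y : k) (x z : Fin n → k),
        ¬ (y = 0 ∧ x = 0 ∧ z = 0) ∧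
        (z - α⁻¹ • x) ⬝ᵥ γ = 2 * y ∧
        B.mulVec (α • z - x) = -(y • γ) ∧
        B.mulVec (α • z + x) = -((y + α⁻¹ * (x ⬝ᵥ γ)) • γ)) ↔
      ((2 * α) • B + Matrix.vecMulVec γ γ).det = 0 := by
  rw [← Matrix.exists_mulVec_eq_zero_iff]
  constructor
  · rintro ⟨y, x, z, h0, h1, h2, h3⟩
    have h1' : z ⬝ᵥ γ - α⁻¹ * (x ⬝ᵥ γ) = 2 * y := by
      simpa [sub_dotProduct, smul_dotProduct] using h1
    have keyx : (2 : k) • B.mulVec x =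
        -((y + α⁻¹ * (x ⬝ᵥ γ)) • γ) - -(y • γ) := by
      rw [← h3, ← h2, ← Matrix.mulVec_sub,
        show (α • z + x) - (α • z - x) = (2 : k) • x by module,
        Matrix.mulVec_smul]
    have keyz : (2 : k) • B.mulVec (α • z) =
        -(y • γ) + -((y + α⁻¹ * (x ⬝ᵥ γ)) • γ) := by
      rw [← h2, ← h3, ← Matrix.mulVec_add,
        show (α • z - x) + (α • z + x) = (2 : k) • (α • z) by module]
      simp only [Matrix.mulVec_smul]
    have hx : ((2 * α) • B + Matrix.vecMulVec γ γ).mulVec x = 0 := by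
      rw [Matrix.add_mulVec, Matrix.smul_mulVec, vecMulVec_mulVec_eq,
        show (2 * α) • B.mulVec x = α • ((2 : k) • B.mulVec x) by module,
        keyx, dotProduct_comm]
      match_scalars
      field_simp
      ring
    have hz : ((2 * α) • B + Matrix.vecMulVec γ γ).mulVec z = 0 := by
      rw [Matrix.add_mulVec, Matrix.smul_mulVec, vecMulVec_mulVec_eq,
        show (2 * α) • B.mulVec z = (2 : k) • B.mulVec (α • z) by
          simp only [Matrix.mulVec_smul, smul_smul],
        keyz]
      match_scalars
      rw [dotProduct_comm γ z]
      linear_combination h1'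
    by_cases hxz : x = 0
    · refine ⟨z, fun hz0 => h0 ⟨?_, hxz, hz0⟩, hz⟩
      have : (0 : k) = 2 * y := by simpa [hxz, hz0] using h1
      exact (mul_eq_zero.mp this.symm).resolve_left hchar
    · exact ⟨x, hxz, hx⟩
  · rintro ⟨v, hv, hMv⟩
    rw [Matrix.add_mulVec, Matrix.smul_mulVec, vecMulVec_mulVec_eq] at hMv
    refine ⟨0, α • v, v, fun h => hv h.2.2, ?_, ?_, ?_⟩
    · rw [show v - α⁻¹ • (α • v) = 0 by
        rw [smul_smul, inv_mul_cancel₀ hα, one_smul]; module]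
      simp
    · rw [show α • v - α • v = 0 by module]
      simp
    · rw [show α • v + α • v = (2 * α) • v by module, Matrix.mulVec_smul,
        show (2 * α) • B.mulVec v = -((γ ⬝ᵥ v) • γ) by
          linear_combination (norm := module) hMv]
      rw [smul_dotProduct, dotProduct_comm γ v]
      match_scalars
      field_simp
      rw [smul_eq_mul]
      ring
end
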